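/- For every parallel critical pair s ≈ t of the transformed TRS R̄ there exist a constrained parallel critical pair s′ ≈ t′ [φ′] of the LCTRS R and a substitution γ such that s = s′γ, t = t′γ and γ ⊨ φ′. -/

import Mathlib

namespace LCT

/-! ### First-order terms over signature `F` with natural-number variables -/

inductive Term (F : Type) : Type
  | var : ℕ → Term F
  | app : F → List (Term F) → Term F

instance {F : Type} : Inhabited (Term F) := ⟨Term.var 0⟩

namespace Term

variable {F : Type}

/-- Application of a substitution (total map from variables to terms). -/
def subst (σ : ℕ → Term F) : Term F → Term F
  | var x => σ x
  | app f ts => app f (ts.attach.map fun ⟨t, _⟩ => subst σ t)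

/-- The list of (occurrences of) variables of a term. -/
def varsList : Term F → List ℕ
  | var x => [x]
  | app _ ts => (ts.attach.map fun ⟨t, _⟩ => varsList t).flatten

/-- The set of variables of a term. -/
def vars (t : Term F) : Set ℕ := {x | x ∈ t.varsList}

/-- Number of occurrences of the variable `x` in a term. -/
def count (x : ℕ) : Term F → ℕ
  | var y => if y = x then 1 else 0
  | app _ ts => (ts.attach.map fun ⟨t, _⟩ => count x t).sum

/-- The subterm at a position (a position is a list of argument indices). -/
def subtermAt : Term F → List ℕ → Option (Term F)
  | t, [] => some t
  | var _, _ :: _ => none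
  | app _ ts, i :: p => match ts[i]? with
    | some t => subtermAt t p
    | none => none

/-- Replacement of the subterm at a position. -/
def replaceAt : Term F → List ℕ → Term F → Option (Term F)
  | _, [], u => some u
  | var _, _ :: _, _ => none
  | app f ts, i :: p, u => match ts[i]? with
    | some t => match replaceAt t p u with
      | some t' => some (app f (ts.set i t'))
      | none => none
    | none => none

/-- Renaming of variables. -/
def rename (π : ℕ → ℕ) (t : Term F) : Term F := t.subst (fun x => var (π x))

/-- The term is not a variable (i.e. its root is a function symbol). -/
def isFun : Term F → Prop
  | var _ => False
  | app _ _ => True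

end Term

/-- Simultaneous replacement at a list of (parallel) positions. -/
def replaceAll {F : Type} : Term F → List (List ℕ × Term F) → Option (Term F)
  | t, [] => some t
  | t, (p, u) :: rest => match t.replaceAt p u with
    | some t' => replaceAll t' rest
    | none => none

/-- Two positions are parallel if neither is a prefix of the other. -/
def ParallelPos (p q : List ℕ) : Prop := ¬ p <+: q ∧ ¬ q <+: p

/-- Prefix every position in the `i`-th member of `Qs` with `i` and collect the results. -/
def posJoin (Qs : List (List (List ℕ))) : List (List ℕ) :=
  (Qs.zipIdx.map fun qi => qi.1.map (qi.2 :: ·)).flatten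

/-- The domain of a substitution. -/
def Dom {F : Type} (σ : ℕ → Term F) : Set ℕ := {x | σ x ≠ Term.var x}

/-! ### Abstract rewriting notions -/

/-- Confluence of an abstract relation. -/
def Confluent {α : Type*} (r : α → α → Prop) : Prop :=
  ∀ s t u, Relation.ReflTransGen r s t → Relation.ReflTransGen r s u →
    ∃ v, Relation.ReflTransGen r t v ∧ Relation.ReflTransGen r u v

/-- Local confluence of an abstract relation. -/
def LocallyConfluent {α : Type*} (r : α → α → Prop) : Prop :=
  ∀ s t u, r s t → r s u →
    ∃ v, Relation.ReflTransGen r t v ∧ Relation.ReflTransGen r u v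

/-- Composition of relations. -/
def Comp {α : Type*} (r s : α → α → Prop) : α → α → Prop := fun a c => ∃ b, r a b ∧ s b c

/-! ### Constrained rewrite rules and LCTRSs -/

/-- A constrained rewrite rule `ℓ → r [φ]`. -/
structure Rule (F : Type) where
  lhs : Term F
  rhs : Term F
  cond : Term F

/-- The logical variables `LVar(ρ) = Var(φ) ∪ (Var(r) ∖ Var(ℓ))` of a rule. -/
def LVar {F : Type} (ρ : Rule F) : Set ℕ := ρ.cond.vars ∪ (ρ.rhs.vars \ ρ.lhs.vars)

/-- `EVar(ρ) = Var(r) ∖ (Var(ℓ) ∪ Var(φ))`, as a list. -/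
def EVarList {F : Type} (ρ : Rule F) : List ℕ :=
  ρ.rhs.varsList.filter fun x => !(ρ.lhs.varsList.contains x || ρ.cond.varsList.contains x)

/-- All variables of a rule. -/
def ruleVars {F : Type} (ρ : Rule F) : Set ℕ := ρ.lhs.vars ∪ ρ.rhs.vars ∪ ρ.cond.vars

/-- Terms all of whose function symbols are theory symbols (logical terms). -/
inductive IsLogical {F : Type} (Fth : Set F) : Term F → Prop
  | var (x : ℕ) : IsLogical Fth (.var x)
  | app {f ts} : f ∈ Fth → (∀ t ∈ ts, IsLogical Fth t) → IsLogical Fth (.app f ts)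

/-- A logically constrained term rewrite system (data part): a signature split into
term symbols `Fte` and theory symbols `Fth` with value constants `Val`, an arity
function, an interpretation `J` of ground logical terms, distinguished symbols
`tt` (the truth value ⊤), `andS` (conjunction) and `eqS` (equality), and a set
of constrained rewrite rules. -/
structure LCTRS (F : Type) where
  Fte : Set F
  Fth : Set F
  Val : Set F
  arity : F → ℕ
  J : Term F → F
  tt : F
  andS : F
  eqS : F
  rules : Set (Rule F)

namespace LCTRS

variable {F : Type}

/-- The term `t` is a value. -/
def isVal (R : LCTRS F) (t : Term F) : Prop := ∃ v ∈ R.Val, t = Term.app v []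

/-- `γ` assigns values to all variables in `S`. -/
def valAssign (R : LCTRS F) (S : Set ℕ) (γ : ℕ → Term F) : Prop := ∀ x ∈ S, R.isVal (γ x)

/-- A ground term (no variables). -/
def Ground (t : Term F) : Prop := t.varsList = []

/-- Validity of a constraint: `J(φγ) = ⊤` for every assignment of values to its variables. -/
def validC (R : LCTRS F) (φ : Term F) : Prop :=
  ∀ γ, R.valAssign φ.vars γ → R.J (φ.subst γ) = R.tt

/-- Satisfiability of a constraint. -/
def satC (R : LCTRS F) (φ : Term F) : Prop :=
  ∃ γ, R.valAssign φ.vars γ ∧ R.J (φ.subst γ) = R.tt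

/-- `γ ⊨ φ`: the substitution `γ` respects the constraint `φ`. -/
def respectsC (R : LCTRS F) (γ : ℕ → Term F) (φ : Term F) : Prop :=
  R.valAssign φ.vars γ ∧ R.validC (φ.subst γ)

/-- `σ ⊨ ρ`: the substitution `σ` respects the constrained rule `ρ`. -/
def respectsRule (R : LCTRS F) (σ : ℕ → Term F) (ρ : Rule F) : Prop :=
  Dom σ = ρ.lhs.vars ∪ ρ.rhs.vars ∪ ρ.cond.vars ∧
  (∀ x ∈ LVar ρ, R.isVal (σ x)) ∧ R.validC (ρ.cond.subst σ)

/-- Validity of the implication `φ ⇒ ψ`. -/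
def validImp (R : LCTRS F) (φ ψ : Term F) : Prop :=
  ∀ γ, R.valAssign (φ.vars ∪ ψ.vars) γ → R.J (φ.subst γ) = R.tt → R.J (ψ.subst γ) = R.tt

/-- The calculation rule `f(x₁,…,xₙ) → y [y = f(x₁,…,xₙ)]` for a theory symbol `f`. -/
def calcRule (R : LCTRS F) (f : F) : Rule F :=
  let xs : List (Term F) := (List.range (R.arity f)).map Term.var
  ⟨Term.app f xs, Term.var (R.arity f),
    Term.app R.eqS [Term.var (R.arity f), Term.app f xs]⟩

/-- `R_rc`: the rules of `R` together with all calculation rules. -/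
def Rrc (R : LCTRS F) : Set (Rule F) :=
  R.rules ∪ {ρ | ∃ f ∈ R.Fth \ R.Val, ρ = R.calcRule f}

/-- The conjunction `a ∧ b` as a logical term. -/
def conj (R : LCTRS F) (a b : Term F) : Term F := Term.app R.andS [a, b]

/-- The truth constant `⊤` as a logical term. -/
def trueT (R : LCTRS F) : Term F := Term.app R.tt []

/-- Conjunction of a list of constraints. -/
def bigConj (R : LCTRS F) (l : List (Term F)) : Term F := l.foldr R.conj R.trueT

/-- `EC_ρ`: the conjunction of `x = x` for all `x ∈ EVar(ρ)`. -/
def EC (R : LCTRS F) (ρ : Rule F) : Term F :=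
  R.bigConj ((EVarList ρ).map fun x => Term.app R.eqS [Term.var x, Term.var x])

/-- Well-formedness of an LCTRS: the axioms on the signature, values,
interpretation, the distinguished logical symbols, and the rules. -/
def WF (R : LCTRS F) : Prop :=
  R.Val ⊆ R.Fth ∧ R.Fte ∩ R.Fth ⊆ R.Val ∧ (∀ ι ∈ R.Val, R.arity ι = 0) ∧
  (∀ t, R.J t ∈ R.Val) ∧ (∀ v ∈ R.Val, R.J (Term.app v []) = v) ∧
  R.tt ∈ R.Val ∧ R.andS ∈ R.Fth \ R.Val ∧ R.arity R.andS = 2 ∧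
  R.eqS ∈ R.Fth \ R.Val ∧ R.arity R.eqS = 2 ∧
  (∀ a b : Term F, IsLogical R.Fth a → IsLogical R.Fth b → Ground a → Ground b →
    (R.J (R.conj a b) = R.tt ↔ (R.J a = R.tt ∧ R.J b = R.tt))) ∧
  (∀ a b : Term F, IsLogical R.Fth a → IsLogical R.Fth b → Ground a → Ground b →
    (R.J (Term.app R.eqS [a, b]) = R.tt ↔ R.J a = R.J b)) ∧
  (∀ ρ ∈ R.rules, (∃ f ts, ρ.lhs = Term.app f ts ∧ f ∈ R.Fte \ R.Fth) ∧
    IsLogical R.Fth ρ.cond)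

/-! ### Rewriting induced by an LCTRS -/

/-- One rewrite step at position `p`. -/
def rstepAt (R : LCTRS F) (p : List ℕ) (s t : Term F) : Prop :=
  ∃ ρ ∈ R.Rrc, ∃ σ, R.respectsRule σ ρ ∧
    s.subtermAt p = some (ρ.lhs.subst σ) ∧ s.replaceAt p (ρ.rhs.subst σ) = some t

/-- The rewrite relation `→_R`. -/
def rstep (R : LCTRS F) (s t : Term F) : Prop := ∃ p, R.rstepAt p s t

/-- A rewrite step at a position below (or equal to) `q`. -/
def rstepGe (R : LCTRS F) (q : List ℕ) (s t : Term F) : Prop :=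
  ∃ p, q <+: p ∧ R.rstepAt p s t

end LCTRS

/-! ### TRSs (unconstrained term rewrite systems) -/

/-- A TRS is a set of rules, i.e. pairs of terms. -/
abbrev TRS (F : Type) := Set (Term F × Term F)

/-- One rewrite step of a TRS at position `p`. -/
def tstepAt {F : Type} (S : TRS F) (p : List ℕ) (s t : Term F) : Prop :=
  ∃ lr ∈ S, ∃ σ : ℕ → Term F,
    s.subtermAt p = some (lr.1.subst σ) ∧ s.replaceAt p (lr.2.subst σ) = some t

/-- The rewrite relation of a TRS. -/
def tstep {F : Type} (S : TRS F) (s t : Term F) : Prop := ∃ p, tstepAt S p s t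

/-- A TRS is left-linear if no variable occurs twice in a left-hand side. -/
def LeftLinearTRS {F : Type} (S : TRS F) : Prop := ∀ lr ∈ S, ∀ x, lr.1.count x ≤ 1

/-! ### The transformed TRS `R̄` of an LCTRS -/

/-- The TRS `R̄`: all value instances `ℓτ → rτ` of constrained rules, together with
the calculation instances `f(v₁,…,vₙ) → J(f(v₁,…,vₙ))`. -/
def barTRS {F : Type} (R : LCTRS F) : TRS F :=
  {lr | ∃ ρ ∈ R.rules, ∃ τ : ℕ → Term F, Dom τ = LVar ρ ∧
      (∀ x ∈ LVar ρ, R.isVal (τ x)) ∧ R.validC (ρ.cond.subst τ) ∧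
      lr = (ρ.lhs.subst τ, ρ.rhs.subst τ)} ∪
  {lr | ∃ f ∈ R.Fth \ R.Val, ∃ vs : List F, vs.length = R.arity f ∧
      (∀ v ∈ vs, v ∈ R.Val) ∧
      lr = (Term.app f (vs.map fun v => Term.app v []),
            Term.app (R.J (Term.app f (vs.map fun v => Term.app v []))) [])}

/-! ### Generic multi-steps and parallel steps -/

/-- Generic multi-step relation over a set of constrained rules with a side
condition `Cond` on the rule and the matching substitution. -/
inductive MStepG {F : Type} (Rules : Set (Rule F)) (Cond : Rule F → (ℕ → Term F) → Prop) :
    Term F → Term F → Prop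
  | var (x : ℕ) : MStepG Rules Cond (.var x) (.var x)
  | app {f : F} {ss ts : List (Term F)} :
      List.Forall₂ (MStepG Rules Cond) ss ts → MStepG Rules Cond (.app f ss) (.app f ts)
  | rule {ρ : Rule F} {σ τ : ℕ → Term F} :
      ρ ∈ Rules → Cond ρ σ → (∀ x, MStepG Rules Cond (σ x) (τ x)) →
      MStepG Rules Cond (ρ.lhs.subst σ) (ρ.rhs.subst τ)

mutual
/-- Generic parallel rewriting, annotated with the list of (parallel) positions of
the contracted redexes; `Root` is the root-step relation. -/
inductive ParP {F : Type} (Root : Term F → Term F → Prop) :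
    List (List ℕ) → Term F → Term F → Prop
  | var (x : ℕ) : ParP Root [] (.var x) (.var x)
  | app {f : F} {Qs ss ts} : ParPs Root Qs ss ts →
      ParP Root (posJoin Qs) (.app f ss) (.app f ts)
  | rule {s t : Term F} : Root s t → ParP Root [[]] s t

inductive ParPs {F : Type} (Root : Term F → Term F → Prop) :
    List (List (List ℕ)) → List (Term F) → List (Term F) → Prop
  | nil : ParPs Root [] [] []
  | cons {Q s t Qs ss ts} : ParP Root Q s t → ParPs Root Qs ss ts →
      ParPs Root (Q :: Qs) (s :: ss) (t :: ts)
end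

/-- Root steps of a TRS. -/
def trootStep {F : Type} (S : TRS F) (s t : Term F) : Prop :=
  ∃ lr ∈ S, ∃ σ : ℕ → Term F, s = lr.1.subst σ ∧ t = lr.2.subst σ

/-- The parallel rewrite relation `⇉^Q` of a TRS. -/
def tparQ {F : Type} (S : TRS F) (Q : List (List ℕ)) : Term F → Term F → Prop :=
  ParP (trootStep S) Q

/-- The parallel rewrite relation `⇉` of a TRS. -/
def tpar {F : Type} (S : TRS F) (s t : Term F) : Prop := ∃ Q, tparQ S Q s t

/-- The multi-step relation `⊸→` of a TRS. -/
def tmstep {F : Type} (S : TRS F) : Term F → Term F → Prop :=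
  MStepG {ρ : Rule F | (ρ.lhs, ρ.rhs) ∈ S} (fun _ _ => True)

namespace LCTRS

variable {F : Type}

/-- Root steps of an LCTRS (on unconstrained terms). -/
def lrootStep (R : LCTRS F) (s t : Term F) : Prop :=
  ∃ ρ ∈ R.Rrc, ∃ σ, R.respectsRule σ ρ ∧ s = ρ.lhs.subst σ ∧ t = ρ.rhs.subst σ

/-- The parallel rewrite relation `⇉^Q` of an LCTRS on terms. -/
def lparQ (R : LCTRS F) (Q : List (List ℕ)) : Term F → Term F → Prop :=
  ParP R.lrootStep Q

/-- The parallel rewrite relation `⇉` of an LCTRS on terms. -/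
def lpar (R : LCTRS F) (s t : Term F) : Prop := ∃ Q, R.lparQ Q s t

/-- The multi-step relation `⊸→` of an LCTRS on terms. -/
def lmstep (R : LCTRS F) : Term F → Term F → Prop :=
  MStepG R.Rrc (fun ρ σ => R.respectsRule σ ρ)

/-! ### Constrained terms and rewriting on them -/

/-- Side condition for rewriting a constrained term with constraint `φ` using
rule `ρ` and substitution `σ`: `σ(x) ∈ Val ∪ Var(φ)` for logical variables,
`φ` is satisfiable and `φ ⇒ ψσ` is valid. -/
def ccond (R : LCTRS F) (φ : Term F) (ρ : Rule F) (σ : ℕ → Term F) : Prop :=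
  (∀ x ∈ LVar ρ, R.isVal (σ x) ∨ ∃ y ∈ φ.vars, σ x = Term.var y) ∧
  R.satC φ ∧ R.validImp φ (ρ.cond.subst σ)

/-- One step on a constrained term (the constraint `φ` is left unchanged) at position `p`. -/
def cstepAt (R : LCTRS F) (φ : Term F) (p : List ℕ) (s t : Term F) : Prop :=
  ∃ ρ ∈ R.Rrc, ∃ σ, R.ccond φ ρ σ ∧
    s.subtermAt p = some (ρ.lhs.subst σ) ∧ s.replaceAt p (ρ.rhs.subst σ) = some t

/-- A step on a constrained term at a position below (or equal to) `q`. -/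
def cstepGe (R : LCTRS F) (φ : Term F) (q : List ℕ) (s t : Term F) : Prop :=
  ∃ p, q <+: p ∧ R.cstepAt φ p s t

/-- Root steps on constrained terms with constraint `φ`. -/
def crootStep (R : LCTRS F) (φ : Term F) (s t : Term F) : Prop :=
  ∃ ρ ∈ R.Rrc, ∃ σ, R.ccond φ ρ σ ∧ s = ρ.lhs.subst σ ∧ t = ρ.rhs.subst σ

/-- The parallel relation `⇉^Q` on constrained terms (constraint unchanged). -/
def cparQ (R : LCTRS F) (φ : Term F) (Q : List (List ℕ)) : Term F → Term F → Prop :=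
  ParP (R.crootStep φ) Q

/-- The multi-step relation `⊸→` on constrained terms (constraint unchanged). -/
def cmstep (R : LCTRS F) (φ : Term F) : Term F → Term F → Prop :=
  MStepG R.Rrc (R.ccond φ)

/-- Equivalence `∼` of constrained terms (domains restricted to the constraint variables). -/
def simTerm (R : LCTRS F) (s φ t ψ : Term F) : Prop :=
  (∀ γ, R.respectsC γ φ → Dom γ = φ.vars →
    ∃ δ, R.respectsC δ ψ ∧ Dom δ = ψ.vars ∧ s.subst γ = t.subst δ) ∧
  (∀ δ, R.respectsC δ ψ → Dom δ = ψ.vars →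
    ∃ γ, R.respectsC γ φ ∧ Dom γ = φ.vars ∧ s.subst γ = t.subst δ)

/-- The equivalence `∼′` of constrained terms (unrestricted domains). -/
def simTerm' (R : LCTRS F) (s φ t ψ : Term F) : Prop :=
  (∀ γ, R.respectsC γ φ → ∃ δ, R.respectsC δ ψ ∧ s.subst γ = t.subst δ) ∧
  (∀ δ, R.respectsC δ ψ → ∃ γ, R.respectsC γ φ ∧ s.subst γ = t.subst δ)

end LCTRS

/-- A constrained pair `s ≈ t [φ]` (the constrained term with binary root `≈`). -/
abbrev CPair (F : Type) := Term F × Term F × Term F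

namespace LCTRS

variable {F : Type}

/-- Equivalence `∼` on constrained pairs `s ≈ t [φ]`. -/
def simPair (R : LCTRS F) (a b : CPair F) : Prop :=
  (∀ γ, R.respectsC γ a.2.2 → Dom γ = a.2.2.vars →
    ∃ δ, R.respectsC δ b.2.2 ∧ Dom δ = b.2.2.vars ∧
      a.1.subst γ = b.1.subst δ ∧ a.2.1.subst γ = b.2.1.subst δ) ∧
  (∀ δ, R.respectsC δ b.2.2 → Dom δ = b.2.2.vars →
    ∃ γ, R.respectsC γ a.2.2 ∧ Dom γ = a.2.2.vars ∧
      a.1.subst γ = b.1.subst δ ∧ a.2.1.subst γ = b.2.1.subst δ)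

/-- A raw rewrite step on the pair inside the first component, below position `1·q`. -/
def rawStepFstGe (R : LCTRS F) (q : List ℕ) (a b : CPair F) : Prop :=
  b.2.2 = a.2.2 ∧ b.2.1 = a.2.1 ∧ R.cstepGe a.2.2 q a.1 b.1

/-- A raw rewrite step on the pair inside the second component, below position `2·q`. -/
def rawStepSndGe (R : LCTRS F) (q : List ℕ) (a b : CPair F) : Prop :=
  b.2.2 = a.2.2 ∧ b.1 = a.1 ∧ R.cstepGe a.2.2 q a.2.1 b.2.1

/-- `~→_{≥1q}` on constrained pairs (`∼ · → · ∼`, step in the first component). -/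
def sstepFstGe (R : LCTRS F) (q : List ℕ) : CPair F → CPair F → Prop :=
  Comp R.simPair (Comp (R.rawStepFstGe q) R.simPair)

/-- `~→_{≥2q}` on constrained pairs (`∼ · → · ∼`, step in the second component). -/
def sstepSndGe (R : LCTRS F) (q : List ℕ) : CPair F → CPair F → Prop :=
  Comp R.simPair (Comp (R.rawStepSndGe q) R.simPair)

/-- A raw multi-step on the pair inside the first component. -/
def rawMStepFst (R : LCTRS F) (a b : CPair F) : Prop :=
  b.2.2 = a.2.2 ∧ b.2.1 = a.2.1 ∧ R.cmstep a.2.2 a.1 b.1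

/-- `~⊸→_{≥1}` on constrained pairs. -/
def smstepFst (R : LCTRS F) : CPair F → CPair F → Prop :=
  Comp R.simPair (Comp R.rawMStepFst R.simPair)

/-- A raw parallel step `⇉^P` on the pair inside the first component. -/
def rawParFst (R : LCTRS F) (P : List (List ℕ)) (a b : CPair F) : Prop :=
  b.2.2 = a.2.2 ∧ b.2.1 = a.2.1 ∧ R.cparQ a.2.2 P a.1 b.1

/-- A raw parallel step `⇉^Q` on the pair inside the second component. -/
def rawParSnd (R : LCTRS F) (Q : List (List ℕ)) (a b : CPair F) : Prop :=
  b.2.2 = a.2.2 ∧ b.1 = a.1 ∧ R.cparQ a.2.2 Q a.2.1 b.2.1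

/-- `~⇉_{≥1}^P` on constrained pairs. -/
def sparFst (R : LCTRS F) (P : List (List ℕ)) : CPair F → CPair F → Prop :=
  Comp R.simPair (Comp (R.rawParFst P) R.simPair)

/-- `~⇉_{≥2}^Q` on constrained pairs. -/
def sparSnd (R : LCTRS F) (Q : List (List ℕ)) : CPair F → CPair F → Prop :=
  Comp R.simPair (Comp (R.rawParSnd Q) R.simPair)

/-- A constrained pair `u ≈ v [ψ]` is trivial if `uσ = vσ` for every `σ ⊨ ψ`. -/
def TrivialC (R : LCTRS F) (u v ψ : Term F) : Prop :=
  ∀ σ, R.respectsC σ ψ → u.subst σ = v.subst σ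

end LCTRS

/-! ### Unification, variants, critical pairs -/

/-- `σ` unifies `s` and `t`. -/
def Unifies {F : Type} (σ : ℕ → Term F) (s t : Term F) : Prop := s.subst σ = t.subst σ

/-- `σ` is a most general unifier of `s` and `t`. -/
def IsMGU {F : Type} (σ : ℕ → Term F) (s t : Term F) : Prop :=
  Unifies σ s t ∧ ∀ θ, Unifies θ s t → ∃ δ, ∀ x, (σ x).subst δ = θ x

/-- `(ℓ₂, r₂)` is a variant (bijective renaming) of `(ℓ₁, r₁)`. -/
def IsVariantP {F : Type} (a b : Term F × Term F) : Prop :=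
  ∃ π : ℕ ≃ ℕ, b.1 = a.1.rename π ∧ b.2 = a.2.rename π

/-- `ρ₂` is a variant (bijective renaming) of the constrained rule `ρ₁`. -/
def IsVariantR {F : Type} (a b : Rule F) : Prop :=
  ∃ π : ℕ ≃ ℕ, b.lhs = a.lhs.rename π ∧ b.rhs = a.rhs.rename π ∧ b.cond = a.cond.rename π

/-- `s ≈ t` is a critical pair of the TRS `S` obtained from an overlap at position `p`. -/
def IsCPAt {F : Type} (S : TRS F) (p : List ℕ) (s t : Term F) : Prop :=
  ∃ (l₁ r₁ l₂ r₂ : Term F) (σ : ℕ → Term F) (l2p : Term F),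
    (∃ lr ∈ S, IsVariantP lr (l₁, r₁)) ∧
    (∃ lr ∈ S, IsVariantP lr (l₂, r₂)) ∧
    (l₁.vars ∪ r₁.vars) ∩ (l₂.vars ∪ r₂.vars) = ∅ ∧
    l₂.subtermAt p = some l2p ∧ l2p.isFun ∧
    IsMGU σ l₁ l2p ∧
    (p = [] → ¬ IsVariantP (l₁, r₁) (l₂, r₂)) ∧
    (l₂.subst σ).replaceAt p (r₁.subst σ) = some s ∧
    t = r₂.subst σ

/-- `s ≈ t [φc]` is a constrained critical pair of the LCTRS `R` obtained from an
overlap at position `p`. -/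
def IsCCPAt {F : Type} (R : LCTRS F) (p : List ℕ) (s t φc : Term F) : Prop :=
  ∃ (ρ₁ ρ₂ : Rule F) (σ : ℕ → Term F) (l2p : Term F),
    (∃ ρ ∈ R.Rrc, IsVariantR ρ ρ₁) ∧
    (∃ ρ ∈ R.Rrc, IsVariantR ρ ρ₂) ∧
    ruleVars ρ₁ ∩ ruleVars ρ₂ = ∅ ∧
    ρ₂.lhs.subtermAt p = some l2p ∧ l2p.isFun ∧
    IsMGU σ ρ₁.lhs l2p ∧
    (∀ x ∈ LVar ρ₁ ∪ LVar ρ₂, R.isVal (σ x) ∨ ∃ y, σ x = Term.var y) ∧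
    R.satC (R.conj (ρ₁.cond.subst σ) (ρ₂.cond.subst σ)) ∧
    (p = [] → ¬ IsVariantR ρ₁ ρ₂ ∨ ¬ (ρ₁.rhs.vars ⊆ ρ₁.lhs.vars)) ∧
    (ρ₂.lhs.subst σ).replaceAt p (ρ₁.rhs.subst σ) = some s ∧
    t = ρ₂.rhs.subst σ ∧
    φc = R.conj (ρ₁.cond.subst σ)
           (R.conj (ρ₂.cond.subst σ) ((R.conj (R.EC ρ₁) (R.EC ρ₂)).subst σ))

/-- `s ≈ t` is a parallel critical pair of the TRS `S`: `Ps` is the list of parallel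
overlap positions and `lsig` is the instantiated left-hand side `ℓσ`. -/
def IsPCP {F : Type} (S : TRS F) (Ps : List (List ℕ)) (lsig s t : Term F) : Prop :=
  ∃ (l r : Term F) (prs : List (List ℕ × Term F × Term F)) (σ : ℕ → Term F),
    Ps = prs.map (·.1) ∧ Ps ≠ [] ∧ Ps.Pairwise ParallelPos ∧
    (∃ lr ∈ S, IsVariantP lr (l, r)) ∧
    (∀ pr ∈ prs, ∃ lr ∈ S, IsVariantP lr pr.2) ∧
    prs.Pairwise (fun a b =>
      (a.2.1.vars ∪ a.2.2.vars) ∩ (b.2.1.vars ∪ b.2.2.vars) = ∅) ∧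
    (∀ pr ∈ prs, (l.vars ∪ r.vars) ∩ (pr.2.1.vars ∪ pr.2.2.vars) = ∅) ∧
    (∀ pr ∈ prs, ∃ u, l.subtermAt pr.1 = some u ∧ u.isFun) ∧
    (∀ pr ∈ prs, ∀ u, l.subtermAt pr.1 = some u → Unifies σ pr.2.1 u) ∧
    (∀ θ : ℕ → Term F, (∀ pr ∈ prs, ∀ u, l.subtermAt pr.1 = some u → Unifies θ pr.2.1 u) →
      ∃ δ, ∀ x, (σ x).subst δ = θ x) ∧
    (∀ lp rp, prs = [([], lp, rp)] → ¬ IsVariantP (lp, rp) (l, r)) ∧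
    lsig = l.subst σ ∧
    replaceAll lsig (prs.map fun pr => (pr.1, pr.2.2.subst σ)) = some s ∧
    t = r.subst σ

/-- `s ≈ t [Φ]` is a constrained parallel critical pair of the LCTRS `R`: `Ps` is the
list of parallel overlap positions and `lsig` is the instantiated left-hand side `ℓσ`. -/
def IsCPCP {F : Type} (R : LCTRS F) (Ps : List (List ℕ)) (lsig s t Φ : Term F) : Prop :=
  ∃ (ρ : Rule F) (prs : List (List ℕ × Rule F)) (σ : ℕ → Term F),
    Ps = prs.map (·.1) ∧ Ps ≠ [] ∧ Ps.Pairwise ParallelPos ∧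
    (∃ ρ' ∈ R.Rrc, IsVariantR ρ' ρ) ∧
    (∀ pr ∈ prs, ∃ ρ' ∈ R.Rrc, IsVariantR ρ' pr.2) ∧
    prs.Pairwise (fun a b => ruleVars a.2 ∩ ruleVars b.2 = ∅) ∧
    (∀ pr ∈ prs, ruleVars ρ ∩ ruleVars pr.2 = ∅) ∧
    (∀ pr ∈ prs, ∃ u, ρ.lhs.subtermAt pr.1 = some u ∧ u.isFun) ∧
    (∀ pr ∈ prs, ∀ u, ρ.lhs.subtermAt pr.1 = some u → Unifies σ pr.2.lhs u) ∧
    (∀ θ : ℕ → Term F,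
      (∀ pr ∈ prs, ∀ u, ρ.lhs.subtermAt pr.1 = some u → Unifies θ pr.2.lhs u) →
      ∃ δ, ∀ x, (σ x).subst δ = θ x) ∧
    (∀ x, (x ∈ LVar ρ ∨ ∃ pr ∈ prs, x ∈ LVar pr.2) →
      R.isVal (σ x) ∨ ∃ y, σ x = Term.var y) ∧
    R.satC (R.conj (ρ.cond.subst σ) (R.bigConj (prs.map fun pr => pr.2.cond.subst σ))) ∧
    (∀ ρε, prs = [([], ρε)] → ¬ IsVariantR ρε ρ ∨ ¬ (ρ.rhs.vars ⊆ ρ.lhs.vars)) ∧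
    lsig = ρ.lhs.subst σ ∧
    replaceAll lsig (prs.map fun pr => (pr.1, pr.2.rhs.subst σ)) = some s ∧
    t = ρ.rhs.subst σ ∧
    Φ = R.conj (ρ.cond.subst σ)
          (R.conj ((R.conj (R.EC ρ) (R.bigConj (prs.map fun pr => R.EC pr.2))).subst σ)
            (R.bigConj (prs.map fun pr => pr.2.cond.subst σ)))

/-- `Var(t, P)`: the variables occurring in subterms of `t` at positions in `P`. -/
def VarsBelow {F : Type} (t : Term F) (P : List (List ℕ)) : Set ℕ :=
  {x | ∃ p ∈ P, ∃ u, t.subtermAt p = some u ∧ x ∈ u.vars}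

/-- `TVar(t, φ, P)`: the non-logical variables (w.r.t. `φ`) in subterms of `t` at
positions in `P`. -/
def TVarsBelow {F : Type} (t φ : Term F) (P : List (List ℕ)) : Set ℕ :=
  {x | ∃ p ∈ P, ∃ u, t.subtermAt p = some u ∧ x ∈ u.vars ∧ x ∉ φ.vars}

/-! ### Closedness conditions -/

namespace LCTRS

variable {F : Type}

/-- A constrained critical pair `s ≈ t [φ]` is development closed. -/
def DevClosedC (R : LCTRS F) (s t φ : Term F) : Prop :=
  ∃ u v ψ, R.smstepFst (s, t, φ) (u, v, ψ) ∧ R.TrivialC u v ψ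

/-- A constrained critical pair (from an overlap at position `p`) is almost
development closed. -/
def AlmostDevClosedC (R : LCTRS F) (p : List ℕ) (s t φ : Term F) : Prop :=
  (p ≠ [] → R.DevClosedC s t φ) ∧
  (p = [] → ∃ a u v ψ, R.smstepFst (s, t, φ) a ∧
    Relation.ReflTransGen (R.sstepSndGe []) a (u, v, ψ) ∧ R.TrivialC u v ψ)

/-- An LCTRS is almost development closed. -/
def AlmostDevClosedLCTRS (R : LCTRS F) : Prop :=
  ∀ p s t φ, IsCCPAt R p s t φ → R.AlmostDevClosedC p s t φ

/-- A constrained critical pair `s ≈ t [φ]` is 1-parallel closed. -/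
def OnePCc (R : LCTRS F) (s t φ : Term F) : Prop :=
  ∃ P a u v ψ, R.sparFst P (s, t, φ) a ∧
    Relation.ReflTransGen (R.sstepSndGe []) a (u, v, ψ) ∧ R.TrivialC u v ψ

/-- A constrained parallel critical pair is 2-parallel closed. -/
def TwoPCc (R : LCTRS F) (Ps : List (List ℕ)) (lsig s t Φ : Term F) : Prop :=
  ∃ Q a u v ψ, R.sparSnd Q (s, t, Φ) a ∧
    Relation.ReflTransGen (R.sstepFstGe []) a (u, v, ψ) ∧ R.TrivialC u v ψ ∧
    TVarsBelow v ψ Q ⊆ TVarsBelow lsig Φ Ps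

/-- An LCTRS is parallel closed. -/
def ParallelClosedLCTRS (R : LCTRS F) : Prop :=
  (∀ p s t φ, IsCCPAt R p s t φ → R.OnePCc s t φ) ∧
  (∀ Ps lsig s t Φ, IsCPCP R Ps lsig s t Φ → R.TwoPCc Ps lsig s t Φ)

/-- Linearity of the left-hand sides in the non-logical variables (this is all that
is needed for left-linearity of the transformed TRS). -/
def LeftLinearOutsideLVar (R : LCTRS F) : Prop :=
  ∀ ρ ∈ R.rules, ∀ x, x ∉ LVar ρ → ρ.lhs.count x ≤ 1

end LCTRS

/-- A TRS is almost development closed. -/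
def AlmostDevClosedTRS {F : Type} (S : TRS F) : Prop :=
  ∀ p s t, IsCPAt S p s t →
    (p ≠ [] → tmstep S s t) ∧
    (p = [] → ∃ w, tmstep S s w ∧ Relation.ReflTransGen (tstep S) t w)

/-- A TRS is 1-parallel closed. -/
def OnePCTRS {F : Type} (S : TRS F) : Prop :=
  ∀ p s t, IsCPAt S p s t → ∃ w, tpar S s w ∧ Relation.ReflTransGen (tstep S) t w

/-- A TRS is 2-parallel closed. -/
def TwoPCTRS {F : Type} (S : TRS F) : Prop :=
  ∀ Ps lsig s t, IsPCP S Ps lsig s t →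
    ∃ v Q, Relation.ReflTransGen (tstep S) s v ∧ tparQ S Q t v ∧
      VarsBelow v Q ⊆ VarsBelow lsig Ps

/-- A TRS is parallel closed. -/
def ParallelClosedTRS {F : Type} (S : TRS F) : Prop := OnePCTRS S ∧ TwoPCTRS S


/-! ### Auxiliary development -/

namespace Term

variable {F : Type}

@[elab_as_elim]
lemma ind {P : Term F → Prop} (hv : ∀ x, P (.var x))
    (ha : ∀ f ts, (∀ t ∈ ts, P t) → P (.app f ts)) : ∀ t, P t
  | .var x => hv x
  | .app f ts => ha f ts (fun t ht =>
      have : sizeOf t < sizeOf (Term.app f ts) := by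
        have := List.sizeOf_lt_of_mem ht; simp; omega
      ind hv ha t)
termination_by t => sizeOf t

@[simp] lemma subst_var (σ : ℕ → Term F) (x : ℕ) : (Term.var x).subst σ = σ x := by rw [Term.subst]

@[simp] lemma subst_app (σ : ℕ → Term F) (f : F) (ts : List (Term F)) :
    (Term.app f ts).subst σ = Term.app f (ts.map (Term.subst σ)) := by
  rw [Term.subst]
  congr 1
  exact List.attach_map_val

@[simp] lemma varsList_var (x : ℕ) : (Term.var (F := F) x).varsList = [x] := by rw [Term.varsList]

@[simp] lemma varsList_app (f : F) (ts : List (Term F)) :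
    (Term.app f ts).varsList = (ts.map Term.varsList).flatten := by
  rw [Term.varsList]
  congr 1
  exact List.attach_map_val

lemma mem_vars_iff (t : Term F) (x : ℕ) : x ∈ t.vars ↔ x ∈ t.varsList := Iff.rfl

@[simp] lemma vars_var (x : ℕ) : (Term.var (F := F) x).vars = {x} := by
  ext y; simp [vars]

lemma mem_vars_app {f : F} {ts : List (Term F)} {x : ℕ} :
    x ∈ (Term.app f ts).vars ↔ ∃ t ∈ ts, x ∈ t.vars := by
  simp [vars]

lemma subst_subst (a b : ℕ → Term F) (t : Term F) :
    (t.subst a).subst b = t.subst (fun x => (a x).subst b) := by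
  induction t using ind with
  | hv x => simp
  | ha f ts ih => simp only [subst_app, List.map_map]
                  congr 1
                  exact List.map_congr_left (fun t ht => ih t ht)

lemma subst_ext {a b : ℕ → Term F} {t : Term F} (h : ∀ x ∈ t.vars, a x = b x) :
    t.subst a = t.subst b := by
  induction t using ind with
  | hv x => simpa using h x (by simp)
  | ha f ts ih =>
      simp only [subst_app]
      congr 1
      exact List.map_congr_left fun t ht => ih t ht fun x hx =>
        h x (mem_vars_app.2 ⟨t, ht, hx⟩)

@[simp] lemma subst_id (t : Term F) : t.subst Term.var = t := by
  induction t using ind with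
  | hv x => simp
  | ha f ts ih =>
      simp only [subst_app]
      congr 1
      exact (List.map_congr_left (fun t ht => ih t ht)).trans (List.map_id _)

lemma mem_vars_subst {σ : ℕ → Term F} {t : Term F} {x : ℕ} :
    x ∈ (t.subst σ).vars ↔ ∃ y ∈ t.vars, x ∈ (σ y).vars := by
  induction t using ind with
  | hv y => simp
  | ha f ts ih =>
      simp only [subst_app, mem_vars_app, List.mem_map]
      constructor
      · rintro ⟨-, ⟨t, ht, rfl⟩, hx⟩
        obtain ⟨y, hy, hxy⟩ := (ih t ht).1 hx
        exact ⟨y, ⟨t, ht, hy⟩, hxy⟩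
      · rintro ⟨y, ⟨t, ht, hyt⟩, hxy⟩
        exact ⟨_, ⟨t, ht, rfl⟩, (ih t ht).2 ⟨y, hyt, hxy⟩⟩

/-- Ground terms are fixed by substitution. -/
lemma subst_ground {t : Term F} (h : t.vars = ∅) (σ : ℕ → Term F) : t.subst σ = t := by
  calc t.subst σ = t.subst Term.var := subst_ext (fun x hx => by rw [h] at hx; cases hx)
  _ = t := subst_id t

lemma vars_eq_empty_iff {t : Term F} : t.vars = ∅ ↔ t.varsList = [] := by
  constructor
  · intro h
    cases hv : t.varsList with
    | nil => rfl
    | cons a l =>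
        exact absurd (h ▸ (by simp [mem_vars_iff, hv] : a ∈ t.vars)) (Set.notMem_empty a)
  · intro h; ext x; simp [mem_vars_iff, h]

/-- Size of a term. -/
def size : Term F → ℕ
  | .var _ => 1
  | .app _ ts => (ts.attach.map fun ⟨t, _⟩ => size t).sum + 1

@[simp] lemma size_var (x : ℕ) : (Term.var (F := F) x).size = 1 := by rw [size]

@[simp] lemma size_app (f : F) (ts : List (Term F)) :
    (Term.app f ts).size = (ts.map size).sum + 1 := by
  rw [size]; congr 2; exact List.attach_map_val

lemma size_pos (t : Term F) : 0 < t.size := by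
  cases t <;> simp

/-- Occurs check: if `x` occurs in `t` then `σ x` is no bigger than `tσ`,
and strictly smaller if `t` is not a variable. -/
lemma size_le_of_mem_vars {x : ℕ} {t : Term F} (h : x ∈ t.vars) (σ : ℕ → Term F) :
    (σ x).size ≤ (t.subst σ).size ∧ (∀ f ts, t = Term.app f ts → (σ x).size < (t.subst σ).size) := by
  induction t using ind with
  | hv y => simp at h; subst h; simp
  | ha f ts ih =>
      obtain ⟨u, hu, hxu⟩ := mem_vars_app.1 h
      have h1 : (σ x).size ≤ (u.subst σ).size := (ih u hu hxu).1
      have h2 : (u.subst σ).size ≤ ((Term.app f ts).subst σ).size - 1 := by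
        simp only [subst_app, size_app, List.map_map]
        have hmem : (u.subst σ).size ∈ (ts.map (fun t => (t.subst σ).size)) :=
          List.mem_map.2 ⟨u, hu, rfl⟩
        have hle := List.le_sum_of_mem hmem
        have hc : (ts.map (fun t => (t.subst σ).size))
            = ts.map (Term.size ∘ Term.subst σ) := rfl
        rw [hc] at hle
        omega
      constructor
      · have := size_pos ((Term.app f ts).subst σ); omega
      · intro g us _
        have := size_pos ((Term.app f ts).subst σ); omega

end Term

namespace Term

variable {F : Type}

@[simp] lemma subtermAt_nil (t : Term F) : t.subtermAt [] = some t := by rw [subtermAt]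

lemma subtermAt_cons_app {f : F} {ts : List (Term F)} {i : ℕ} {p : List ℕ} :
    (Term.app f ts).subtermAt (i :: p) = match ts[i]? with
      | some t => t.subtermAt p
      | none => none := by rw [subtermAt]

lemma subtermAt_subst {t u : Term F} {p : List ℕ} (h : t.subtermAt p = some u)
    (σ : ℕ → Term F) : (t.subst σ).subtermAt p = some (u.subst σ) := by
  induction p generalizing t with
  | nil => simp at h; subst h; simp
  | cons i p ih =>
      cases t with
      | var x => rw [subtermAt] at h; cases h
      | app f ts =>
          rw [subtermAt_cons_app] at h
          cases hts : ts[i]? with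
          | none => rw [hts] at h; cases h
          | some ti =>
              rw [hts] at h
              have : (ts.map (Term.subst σ))[i]? = some (ti.subst σ) := by
                simp [hts]
              rw [subst_app, subtermAt_cons_app, this]
              exact ih h

lemma subtermAt_subst_cases {t u : Term F} {σ : ℕ → Term F} {p : List ℕ}
    (h : (t.subst σ).subtermAt p = some u) :
    (∃ w, t.subtermAt p = some w ∧ u = w.subst σ) ∨
    (∃ x q p', p = q ++ p' ∧ p' ≠ [] ∧ t.subtermAt q = some (Term.var x) ∧
      (σ x).subtermAt p' = some u) := by
  induction p generalizing t with
  | nil => simp at h; subst h; left; exact ⟨t, by simp, rfl⟩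
  | cons i p ih =>
      cases t with
      | var x =>
          right
          exact ⟨x, [], i :: p, rfl, by simp, by simp, by simpa using h⟩
      | app f ts =>
          rw [subst_app, subtermAt_cons_app] at h
          cases hts : (ts.map (Term.subst σ))[i]? with
          | none => rw [hts] at h; cases h
          | some v =>
              rw [hts] at h
              rw [List.getElem?_map] at hts
              cases hts' : ts[i]? with
              | none => rw [hts'] at hts; cases hts
              | some ti =>
                  rw [hts'] at hts
                  have hv : v = ti.subst σ := by
                    simpa using hts.symm
                  subst hv
                  rcases ih h with ⟨w, hw, rfl⟩ | ⟨x, q, p', rfl, hne, hq, hp'⟩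
                  · left
                    exact ⟨w, by rw [subtermAt_cons_app, hts']; exact hw, rfl⟩
                  · right
                    exact ⟨x, i :: q, p', rfl, hne,
                      by rw [subtermAt_cons_app, hts']; exact hq, hp'⟩

lemma exists_pos_of_mem_vars {t : Term F} {x : ℕ} (h : x ∈ t.vars) :
    ∃ p, t.subtermAt p = some (Term.var x) := by
  induction t using ind with
  | hv y => simp at h; subst h; exact ⟨[], by simp⟩
  | ha f ts ih =>
      obtain ⟨u, hu, hxu⟩ := mem_vars_app.1 h
      obtain ⟨p, hp⟩ := ih u hu hxu
      obtain ⟨i, hi, hti⟩ := List.getElem_of_mem hu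
      exact ⟨i :: p, by rw [subtermAt_cons_app, List.getElem?_eq_getElem hi, hti]; exact hp⟩

lemma replaceAt_exists {t w : Term F} {p : List ℕ} (h : t.subtermAt p = some w)
    (u : Term F) : ∃ t', t.replaceAt p u = some t' := by
  induction p generalizing t with
  | nil => exact ⟨u, by rw [replaceAt]⟩
  | cons i p ih =>
      cases t with
      | var x => rw [subtermAt] at h; cases h
      | app f ts =>
          rw [subtermAt_cons_app] at h
          cases hts : ts[i]? with
          | none => rw [hts] at h; cases h
          | some ti =>
              rw [hts] at h
              obtain ⟨t', ht'⟩ := ih h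
              refine ⟨Term.app f (ts.set i t'), ?_⟩
              rw [replaceAt, hts]
              dsimp only
              rw [ht']

lemma replaceAt_subst {t t' u : Term F} {p : List ℕ} (h : t.replaceAt p u = some t')
    (σ : ℕ → Term F) : (t.subst σ).replaceAt p (u.subst σ) = some (t'.subst σ) := by
  induction p generalizing t t' with
  | nil => rw [replaceAt] at h ⊢; cases h; rfl
  | cons i p ih =>
      cases t with
      | var x => rw [replaceAt] at h; cases h
      | app f ts =>
          rw [replaceAt] at h
          cases hts : ts[i]? with
          | none => rw [hts] at h; cases h
          | some ti =>
              rw [hts] at h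
              dsimp only at h
              cases hrep : ti.replaceAt p u with
              | none => rw [hrep] at h; cases h
              | some ti' =>
                  rw [hrep] at h
                  cases h
                  have h1 : (ts.map (Term.subst σ))[i]? = some (ti.subst σ) := by simp [hts]
                  rw [subst_app, replaceAt, h1]
                  dsimp only
                  rw [ih hrep]
                  simp [List.map_set]

lemma subtermAt_replaceAt_parallel {t t' u w : Term F} {p q : List ℕ}
    (hpar : ParallelPos p q) (hq : t.subtermAt q = some w)
    (h : t.replaceAt p u = some t') : t'.subtermAt q = some w := by
  induction p generalizing t t' q with
  | nil => exact absurd (List.nil_prefix) hpar.1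
  | cons i p ih =>
      cases q with
      | nil => exact absurd (List.nil_prefix) hpar.2
      | cons j q =>
          cases t with
          | var x => rw [replaceAt] at h; cases h
          | app f ts =>
              rw [replaceAt] at h
              cases hts : ts[i]? with
              | none => rw [hts] at h; cases h
              | some ti =>
                  rw [hts] at h
                  dsimp only at h
                  cases hrep : ti.replaceAt p u with
                  | none => rw [hrep] at h; cases h
                  | some ti' =>
                      rw [hrep] at h
                      cases h
                      rw [subtermAt_cons_app] at hq
                      by_cases hij : i = j
                      · subst hij
                        rw [hts] at hq
                        have hpq : ParallelPos p q := by
                          constructor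
                          · exact fun hc => hpar.1 (List.cons_prefix_cons.2 ⟨rfl, hc⟩)
                          · exact fun hc => hpar.2 (List.cons_prefix_cons.2 ⟨rfl, hc⟩)
                        have : (ts.set i ti')[i]? = some ti' := by
                          rw [List.getElem?_set_self']
                          simp [hts]
                        rw [subtermAt_cons_app, this]
                        exact ih hpq hq hrep
                      · have h2 : (ts.set i ti')[j]? = ts[j]? := List.getElem?_set_ne hij
                        rw [subtermAt_cons_app, h2]
                        exact hq

end Term

section ReplaceAll

variable {F : Type}

lemma replaceAll_subst {t s : Term F} {l : List (List ℕ × Term F)}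
    (h : replaceAll t l = some s) (σ : ℕ → Term F) :
    replaceAll (t.subst σ) (l.map fun pu => (pu.1, pu.2.subst σ)) = some (s.subst σ) := by
  induction l generalizing t with
  | nil => simp [replaceAll] at h ⊢; subst h; rfl
  | cons pu rest ih =>
      obtain ⟨p, u⟩ := pu
      rw [replaceAll] at h
      cases hrep : t.replaceAt p u with
      | none => rw [hrep] at h; cases h
      | some t1 =>
          rw [hrep] at h
          dsimp only at h
          rw [List.map_cons, replaceAll, Term.replaceAt_subst hrep σ]
          exact ih h

lemma replaceAll_exists {t : Term F} {l : List (List ℕ × Term F)}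
    (hpos : ∀ pu ∈ l, ∃ w, t.subtermAt pu.1 = some w)
    (hpar : (l.map (·.1)).Pairwise ParallelPos) :
    ∃ s, replaceAll t l = some s := by
  induction l generalizing t with
  | nil => exact ⟨t, by rw [replaceAll]⟩
  | cons pu rest ih =>
      obtain ⟨p, u⟩ := pu
      obtain ⟨w, hw⟩ := hpos (p, u) (List.mem_cons_self)
      obtain ⟨t1, ht1⟩ := Term.replaceAt_exists hw u
      rw [List.map_cons, List.pairwise_cons] at hpar
      have hpos1 : ∀ qv ∈ rest, ∃ w', t1.subtermAt qv.1 = some w' := by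
        intro qv hqv
        obtain ⟨w', hw'⟩ := hpos qv (List.mem_cons_of_mem _ hqv)
        exact ⟨w', Term.subtermAt_replaceAt_parallel
          (hpar.1 qv.1 (List.mem_map.2 ⟨qv, hqv, rfl⟩)) hw' ht1⟩
      obtain ⟨s, hs⟩ := ih hpos1 hpar.2
      refine ⟨s, ?_⟩
      rw [replaceAll, ht1]
      exact hs

end ReplaceAll

section MGU

variable {F : Type}

/-- `θ` unifies every pair in the list `E`. -/
def UnifiesE (θ : ℕ → Term F) (E : List (Term F × Term F)) : Prop :=
  ∀ e ∈ E, e.1.subst θ = e.2.subst θ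

/-- `σ` is a most general unifier of `E`. -/
def MGUof (σ : ℕ → Term F) (E : List (Term F × Term F)) : Prop :=
  UnifiesE σ E ∧ ∀ θ, UnifiesE θ E → ∃ δ, ∀ y, (σ y).subst δ = θ y

/-- The variables of a unification problem. -/
def varsE (E : List (Term F × Term F)) : Finset ℕ :=
  (E.flatMap fun e => e.1.varsList ++ e.2.varsList).toFinset

/-- The size of a unification problem. -/
def sizeE (E : List (Term F × Term F)) : ℕ :=
  (E.map fun e => e.1.size + e.2.size).sum

lemma mem_varsE {x : ℕ} {E : List (Term F × Term F)} :
    x ∈ varsE E ↔ ∃ e ∈ E, x ∈ e.1.vars ∨ x ∈ e.2.vars := by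
  simp [varsE, Term.mem_vars_iff]

@[simp] lemma unifiesE_nil (θ : ℕ → Term F) : UnifiesE θ [] := fun e he => absurd he (by simp)

lemma unifiesE_cons {θ : ℕ → Term F} {s t : Term F} {E : List (Term F × Term F)} :
    UnifiesE θ ((s, t) :: E) ↔ s.subst θ = t.subst θ ∧ UnifiesE θ E := by
  constructor
  · intro h; exact ⟨h (s, t) (List.mem_cons_self), fun e he => h e (List.mem_cons_of_mem _ he)⟩
  · rintro ⟨h1, h2⟩ e he
    rcases List.mem_cons.1 he with rfl | he
    · exact h1
    · exact h2 e he

lemma varsE_swap (s t : Term F) (E : List (Term F × Term F)) :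
    varsE ((t, s) :: E) = varsE ((s, t) :: E) := by
  ext x; simp only [mem_varsE, List.mem_cons]
  constructor
  · rintro ⟨e, rfl | he, hx⟩
    · exact ⟨(s, t), Or.inl rfl, hx.symm⟩
    · exact ⟨e, Or.inr he, hx⟩
  · rintro ⟨e, rfl | he, hx⟩
    · exact ⟨(t, s), Or.inl rfl, hx.symm⟩
    · exact ⟨e, Or.inr he, hx⟩

lemma sizeE_swap (s t : Term F) (E : List (Term F × Term F)) :
    sizeE ((t, s) :: E) = sizeE ((s, t) :: E) := by
  simp [sizeE]; omega

lemma unifiesE_swap {θ : ℕ → Term F} {s t : Term F} {E : List (Term F × Term F)} :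
    UnifiesE θ ((t, s) :: E) ↔ UnifiesE θ ((s, t) :: E) := by
  rw [unifiesE_cons, unifiesE_cons, eq_comm]

/-- The statement of the induction hypothesis for `mgu_exists`. -/
def MguIH (n : ℕ) : Prop :=
  ∀ (m : ℕ) (E : List (Term (F := F) × Term F)), (varsE E).card ≤ n → sizeE E ≤ m →
    (∃ θ, UnifiesE θ E) → ∃ σ, MGUof σ E

/-- The variable elimination step. -/
lemma mgu_elim {n : ℕ} (ihn : MguIH (F := F) n) {x : ℕ} {t : Term F}
    {E' : List (Term F × Term F)} (hx : x ∉ t.vars)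
    (hcard : (varsE ((Term.var x, t) :: E')).card ≤ n + 1)
    (huni : ∃ θ, UnifiesE θ ((Term.var x, t) :: E')) :
    ∃ σ, MGUof σ ((Term.var x, t) :: E') := by
  classical
  set sh : ℕ → Term F := fun y => if y = x then t else Term.var y with hsh
  set E'' : List (Term F × Term F) := E'.map fun e => (e.1.subst sh, e.2.subst sh) with hE''
  -- composing with θ whenever θ x = t.subst θ
  have hcomp : ∀ θ : ℕ → Term F, θ x = t.subst θ → ∀ u : Term F,
      (u.subst sh).subst θ = u.subst θ := by
    intro θ hθ u
    rw [Term.subst_subst]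
    exact Term.subst_ext fun y _ => by
      by_cases hyx : y = x
      · subst hyx; simp [hsh, hθ]
      · simp [hsh, hyx]
  have htrans : ∀ θ : ℕ → Term F, UnifiesE θ ((Term.var x, t) :: E') → UnifiesE θ E'' := by
    intro θ hθ
    rw [unifiesE_cons] at hθ
    have hθx : θ x = t.subst θ := by simpa using hθ.1
    intro e he
    obtain ⟨e0, he0, rfl⟩ := List.mem_map.1 he
    simp only
    rw [hcomp θ hθx, hcomp θ hθx]
    exact hθ.2 e0 he0
  -- the variables of E'' avoid x
  have hvsub : varsE E'' ⊆ (varsE ((Term.var x, t) :: E')).erase x := by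
    intro y hy
    obtain ⟨e, he, hor⟩ := mem_varsE.1 hy
    obtain ⟨e0, he0, rfl⟩ := List.mem_map.1 he
    have key : ∀ u : Term F, y ∈ (u.subst sh).vars → y ≠ x ∧ (y ∈ u.vars ∨ y ∈ t.vars) := by
      intro u hyu
      obtain ⟨z, hz, hyz⟩ := Term.mem_vars_subst.1 hyu
      by_cases hzx : z = x
      · subst hzx
        simp only [hsh, if_pos rfl] at hyz
        exact ⟨fun hyx => hx (hyx ▸ hyz), Or.inr hyz⟩
      · simp only [hsh, if_neg hzx] at hyz
        simp at hyz
        subst hyz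
        exact ⟨hzx, Or.inl hz⟩
    have : y ≠ x ∧ (y ∈ e0.1.vars ∨ y ∈ e0.2.vars ∨ y ∈ t.vars) := by
      rcases hor with h | h
      · obtain ⟨h1, h2⟩ := key _ h; exact ⟨h1, h2.elim Or.inl (Or.inr ∘ Or.inr)⟩
      · obtain ⟨h1, h2⟩ := key _ h; exact ⟨h1, h2.elim (Or.inr ∘ Or.inl) (Or.inr ∘ Or.inr)⟩
    rw [Finset.mem_erase]
    refine ⟨this.1, mem_varsE.2 ?_⟩
    rcases this.2 with h | h | h
    · exact ⟨e0, List.mem_cons_of_mem _ he0, Or.inl h⟩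
    · exact ⟨e0, List.mem_cons_of_mem _ he0, Or.inr h⟩
    · exact ⟨(Term.var x, t), List.mem_cons_self, Or.inr h⟩
  have hxmem : x ∈ varsE ((Term.var x, t) :: E') :=
    mem_varsE.2 ⟨(Term.var x, t), List.mem_cons_self, Or.inl (by simp)⟩
  have hcard'' : (varsE E'').card ≤ n := by
    have h1 := Finset.card_le_card hvsub
    have h2 := Finset.card_erase_of_mem hxmem
    omega
  obtain ⟨θ0, hθ0⟩ := huni
  obtain ⟨σ'', hσ''⟩ := ihn (sizeE E'') E'' hcard'' le_rfl ⟨θ0, htrans θ0 hθ0⟩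
  refine ⟨fun y => (sh y).subst σ'', ?_, ?_⟩
  · rw [unifiesE_cons]
    constructor
    · have h1 : (Term.var x).subst (fun y => (sh y).subst σ'') = t.subst σ'' := by
        simp [hsh]
      have h2 : t.subst (fun y => (sh y).subst σ'') = t.subst σ'' := by
        refine Term.subst_ext fun y hy => ?_
        have hyx : y ≠ x := fun h => hx (h ▸ hy)
        simp [hsh, hyx]
      rw [h1, h2]
    · intro e he
      rw [show (fun y => (sh y).subst σ'') = fun y => (sh y).subst σ'' from rfl]
      rw [← Term.subst_subst, ← Term.subst_subst]
      exact hσ''.1 (e.1.subst sh, e.2.subst sh) (List.mem_map.2 ⟨e, he, rfl⟩)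
  · intro θ hθ
    obtain ⟨δ, hδ⟩ := hσ''.2 θ (htrans θ hθ)
    refine ⟨δ, fun y => ?_⟩
    have hfun : (fun z => (σ'' z).subst δ) = θ := funext hδ
    rw [Term.subst_subst, hfun]
    by_cases hyx : y = x
    · subst hyx
      simp only [hsh, if_pos rfl]
      rw [unifiesE_cons] at hθ
      have h3 := hθ.1
      rw [Term.subst_var] at h3
      exact h3.symm
    · simp [hsh, hyx]

end MGU

section MGU2

variable {F : Type}

lemma sizeE_cons (s t : Term F) (E : List (Term F × Term F)) :
    sizeE ((s, t) :: E) = s.size + t.size + sizeE E := by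
  simp [sizeE]; try omega

lemma varsE_cons_subset (e : Term F × Term F) (E : List (Term F × Term F)) :
    varsE E ⊆ varsE (e :: E) := by
  intro x hx
  obtain ⟨e', he', h⟩ := mem_varsE.1 hx
  exact mem_varsE.2 ⟨e', List.mem_cons_of_mem _ he', h⟩

lemma map_subst_eq_iff (g : Term F → Term F) :
    ∀ {ss ts : List (Term F)}, ss.length = ts.length →
      (ss.map g = ts.map g ↔ ∀ p ∈ ss.zip ts, g p.1 = g p.2) := by
  intro ss
  induction ss with
  | nil => intro ts h; cases ts with
      | nil => simp
      | cons b ts => simp at h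
  | cons a ss ih =>
      intro ts h
      cases ts with
      | nil => simp at h
      | cons b ts =>
          simp only [List.map_cons, List.cons.injEq, List.zip_cons_cons, List.mem_cons]
          rw [ih (by simpa using h)]
          constructor
          · rintro ⟨h1, h2⟩ p hp
            rcases hp with rfl | hp
            · exact h1
            · exact h2 p hp
          · intro hp
            exact ⟨hp (a, b) (Or.inl rfl), fun p h' => hp p (Or.inr h')⟩

lemma sizeE_zip : ∀ (ss ts : List (Term F)), ss.length = ts.length →
    sizeE (ss.zip ts) = (ss.map Term.size).sum + (ts.map Term.size).sum := by
  intro ss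
  induction ss with
  | nil => intro ts h; cases ts with
      | nil => simp [sizeE]
      | cons b ts => simp at h
  | cons a ss ih =>
      intro ts h
      cases ts with
      | nil => simp at h
      | cons b ts =>
          rw [List.zip_cons_cons, sizeE_cons, ih ts (by simpa using h)]
          simp
          omega

lemma sizeE_append (A B : List (Term F × Term F)) :
    sizeE (A ++ B) = sizeE A + sizeE B := by
  simp [sizeE]

lemma mguof_nil : ∃ σ : ℕ → Term F, MGUof σ ([] : List (Term F × Term F)) :=
  ⟨Term.var, unifiesE_nil _, fun θ _ => ⟨θ, fun y => by simp⟩⟩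

theorem mgu_exists : ∀ n : ℕ, MguIH (F := F) n := by
  intro n
  induction n with
  | zero =>
      intro m E hcard _ huni
      obtain ⟨θ, hθ⟩ := huni
      have hground : ∀ e ∈ E, ∀ u ∈ [e.1, e.2], u.vars = ∅ := by
        intro e he u hu
        ext x
        simp only [Set.mem_empty_iff_false, iff_false]
        intro hx
        have : x ∈ varsE E := by
          refine mem_varsE.2 ⟨e, he, ?_⟩
          rcases List.mem_pair.1 hu with rfl | rfl
          · exact Or.inl hx
          · exact Or.inr hx
        have := Finset.card_pos.2 ⟨x, this⟩
        omega
      refine ⟨Term.var, ?_, fun θ' _ => ⟨θ', fun y => by simp⟩⟩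
      intro e he
      have h1 := Term.subst_ground (hground e he e.1 (by simp)) θ
      have h2 := Term.subst_ground (hground e he e.2 (by simp)) θ
      have := hθ e he
      rw [h1, h2] at this
      simp only [Term.subst_id]
      exact this
  | succ n ihn =>
      intro m
      induction m with
      | zero =>
          intro E _ hsize huni
          cases E with
          | nil => exact mguof_nil
          | cons e E' =>
              exfalso
              have := Term.size_pos e.1
              have := Term.size_pos e.2
              have : sizeE (e :: E') = e.1.size + e.2.size + sizeE E' := by
                obtain ⟨a, b⟩ := e; exact sizeE_cons a b E'
              omega
      | succ m ihm =>
          intro E hcard hsize huni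
          cases E with
          | nil => exact mguof_nil
          | cons e E' =>
              obtain ⟨s, t⟩ := e
              rw [sizeE_cons] at hsize
              have hs1 := Term.size_pos s
              have hs2 := Term.size_pos t
              by_cases hst : s = t
              · subst hst
                obtain ⟨θ, hθ⟩ := huni
                obtain ⟨σ, hσ⟩ := ihm E' (le_trans (Finset.card_le_card
                    (varsE_cons_subset _ _)) hcard) (by omega)
                  ⟨θ, (unifiesE_cons.1 hθ).2⟩
                refine ⟨σ, unifiesE_cons.2 ⟨rfl, hσ.1⟩, fun θ' hθ' => ?_⟩
                exact hσ.2 θ' (unifiesE_cons.1 hθ').2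
              · -- s ≠ t
                match s, t with
                | Term.var x, t =>
                    by_cases hxt : x ∈ t.vars
                    · exfalso
                      obtain ⟨θ, hθ⟩ := huni
                      have hhd := (unifiesE_cons.1 hθ).1
                      rw [Term.subst_var] at hhd
                      cases t with
                      | var y =>
                          simp at hxt
                          exact hst (by rw [hxt])
                      | app f ts =>
                          have := (Term.size_le_of_mem_vars hxt θ).2 f ts rfl
                          rw [← hhd] at this
                          omega
                    · exact mgu_elim ihn hxt hcard huni
                | Term.app f ss, Term.var y =>
                    by_cases hys : y ∈ (Term.app f ss).vars
                    · exfalso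
                      obtain ⟨θ, hθ⟩ := huni
                      have hhd := (unifiesE_cons.1 hθ).1
                      rw [Term.subst_var] at hhd
                      have := (Term.size_le_of_mem_vars hys θ).2 f ss rfl
                      rw [hhd] at this
                      omega
                    · obtain ⟨θ, hθ⟩ := huni
                      obtain ⟨σ, hσ⟩ := mgu_elim (t := Term.app f ss) (E' := E') ihn hys
                        (by rw [varsE_swap]; exact hcard) ⟨θ, unifiesE_swap.2 hθ⟩
                      exact ⟨σ, unifiesE_swap.1 hσ.1,
                        fun θ' hθ' => hσ.2 θ' (unifiesE_swap.2 hθ')⟩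
                | Term.app f ss, Term.app g ts =>
                    obtain ⟨θ, hθ⟩ := huni
                    have hhd := (unifiesE_cons.1 hθ).1
                    rw [Term.subst_app, Term.subst_app] at hhd
                    obtain ⟨hfg, hmap⟩ := Term.app.inj hhd
                    subst hfg
                    have hlen : ss.length = ts.length := by
                      have := congrArg List.length hmap
                      simpa using this
                    set E'' : List (Term F × Term F) := ss.zip ts ++ E' with hE''
                    have htoE'' : ∀ θ' : ℕ → Term F,
                        UnifiesE θ' ((Term.app f ss, Term.app f ts) :: E') ↔ UnifiesE θ' E'' := by
                      intro θ'
                      rw [unifiesE_cons]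
                      constructor
                      · rintro ⟨h1, h2⟩ e he
                        rcases List.mem_append.1 he with he | he
                        · rw [Term.subst_app, Term.subst_app] at h1
                          have hmap' := (Term.app.inj h1).2
                          exact (map_subst_eq_iff _ hlen).1 hmap' e he
                        · exact h2 e he
                      · intro h
                        constructor
                        · rw [Term.subst_app, Term.subst_app]
                          congr 1
                          exact (map_subst_eq_iff _ hlen).2
                            (fun p hp => h p (List.mem_append.2 (Or.inl hp)))
                        · exact fun e he => h e (List.mem_append.2 (Or.inr he))
                    have hcard'' : (varsE E'').card ≤ n + 1 := by
                      refine le_trans (Finset.card_le_card ?_) hcard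
                      intro z hz
                      obtain ⟨e, he, hor⟩ := mem_varsE.1 hz
                      rcases List.mem_append.1 he with he | he
                      · obtain ⟨h1, h2⟩ := List.of_mem_zip he
                        refine mem_varsE.2 ⟨(Term.app f ss, Term.app f ts),
                          List.mem_cons_self, ?_⟩
                        rcases hor with h | h
                        · exact Or.inl (Term.mem_vars_app.2 ⟨e.1, h1, h⟩)
                        · exact Or.inr (Term.mem_vars_app.2 ⟨e.2, h2, h⟩)
                      · exact mem_varsE.2 ⟨e, List.mem_cons_of_mem _ he, hor⟩
                    have hsize'' : sizeE E'' ≤ m := by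
                      rw [hE'', sizeE_append, sizeE_zip ss ts hlen]
                      rw [Term.size_app, Term.size_app] at hsize
                      omega
                    obtain ⟨σ, hσ⟩ := ihm E'' hcard'' hsize'' ⟨θ, (htoE'' θ).1 hθ⟩
                    exact ⟨σ, (htoE'' σ).2 hσ.1, fun θ' hθ' => hσ.2 θ' ((htoE'' θ').1 hθ')⟩

end MGU2

section Semantics

variable {F : Type} {R : LCTRS F}

lemma isVal_vars {t : Term F} (h : R.isVal t) : t.vars = ∅ := by
  obtain ⟨v, _, rfl⟩ := h
  ext x; simp [Term.mem_vars_iff]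

lemma isVal_subst {t : Term F} (h : R.isVal t) (σ : ℕ → Term F) : t.subst σ = t :=
  Term.subst_ground (isVal_vars h) σ

lemma isVal_logical {t : Term F} (hwf : R.WF) (h : R.isVal t) : IsLogical R.Fth t := by
  obtain ⟨v, hv, rfl⟩ := h
  exact IsLogical.app (hwf.1 hv) (by simp)

lemma isLogical_subst {t : Term F} {σ : ℕ → Term F} (h : IsLogical R.Fth t)
    (hσ : ∀ x ∈ t.vars, IsLogical R.Fth (σ x)) : IsLogical R.Fth (t.subst σ) := by
  induction h with
  | var x => rw [Term.subst_var]; exact hσ x (by simp)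
  | @app f ts hf hts ih =>
      rw [Term.subst_app]
      refine IsLogical.app hf ?_
      intro u hu
      obtain ⟨u0, hu0, rfl⟩ := List.mem_map.1 hu
      exact ih u0 hu0 fun x hx => hσ x (Term.mem_vars_app.2 ⟨u0, hu0, hx⟩)

lemma vars_subst_empty {t : Term F} {σ : ℕ → Term F}
    (h : ∀ x ∈ t.vars, (σ x).vars = ∅) : (t.subst σ).vars = ∅ := by
  ext y
  simp only [Set.mem_empty_iff_false, iff_false]
  intro hy
  obtain ⟨x, hx, hyx⟩ := Term.mem_vars_subst.1 hy
  rw [h x hx] at hyx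
  exact hyx

lemma validC_of_ground_tt (hg : ∀ x, x ∉ (t : Term F).vars) (htt : R.J t = R.tt) :
    R.validC t := by
  intro γ _
  rw [Term.subst_ext (a := γ) (b := Term.var) (fun x hx => absurd hx (hg x)), Term.subst_id]
  exact htt

lemma J_tt_of_validC_ground {t : Term F} (hg : t.vars = ∅) (h : R.validC t) :
    R.J t = R.tt := by
  have := h Term.var (fun x hx => by rw [hg] at hx; cases hx)
  rwa [Term.subst_id] at this

@[simp] lemma subst_conj (a b : Term F) (σ : ℕ → Term F) :
    (R.conj a b).subst σ = R.conj (a.subst σ) (b.subst σ) := by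
  simp [LCTRS.conj]

@[simp] lemma subst_trueT (σ : ℕ → Term F) : (R.trueT).subst σ = R.trueT := by
  simp [LCTRS.trueT]

lemma subst_bigConj (l : List (Term F)) (σ : ℕ → Term F) :
    (R.bigConj l).subst σ = R.bigConj (l.map (Term.subst σ)) := by
  induction l with
  | nil => simp [LCTRS.bigConj]
  | cons a l ih => simp only [LCTRS.bigConj, List.foldr_cons, subst_conj, List.map_cons]
                   rw [← LCTRS.bigConj, ← LCTRS.bigConj, ih]

lemma mem_vars_conj {a b : Term F} {x : ℕ} :
    x ∈ (R.conj a b).vars ↔ x ∈ a.vars ∨ x ∈ b.vars := by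
  simp [LCTRS.conj, Term.mem_vars_app]

lemma mem_vars_trueT (x : ℕ) : x ∉ (R.trueT).vars := by
  simp [LCTRS.trueT, Term.mem_vars_app]

lemma mem_vars_bigConj {l : List (Term F)} {x : ℕ} :
    x ∈ (R.bigConj l).vars ↔ ∃ a ∈ l, x ∈ a.vars := by
  induction l with
  | nil => simp [LCTRS.bigConj]; exact mem_vars_trueT x
  | cons a l ih =>
      simp only [LCTRS.bigConj, List.foldr_cons] at ih ⊢
      rw [show (List.foldr R.conj R.trueT l) = R.bigConj l from rfl] at *
      rw [mem_vars_conj]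
      simp only [List.mem_cons]
      constructor
      · rintro (h | h)
        · exact ⟨a, Or.inl rfl, h⟩
        · obtain ⟨b, hb, hx⟩ := ih.1 h
          exact ⟨b, Or.inr hb, hx⟩
      · rintro ⟨b, rfl | hb, hx⟩
        · exact Or.inl hx
        · exact Or.inr (ih.2 ⟨b, hb, hx⟩)

lemma trueT_logical (hwf : R.WF) : IsLogical R.Fth (R.trueT) :=
  IsLogical.app (hwf.1 hwf.2.2.2.2.2.1) (by simp)

lemma J_trueT (hwf : R.WF) : R.J R.trueT = R.tt :=
  hwf.2.2.2.2.1 R.tt hwf.2.2.2.2.2.1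

lemma conj_logical (hwf : R.WF) {a b : Term F} (ha : IsLogical R.Fth a)
    (hb : IsLogical R.Fth b) : IsLogical R.Fth (R.conj a b) := by
  refine IsLogical.app hwf.2.2.2.2.2.2.1.1 ?_
  intro t ht
  rcases List.mem_pair.1 ht with rfl | rfl <;> assumption

lemma conj_ground {a b : Term F} (ha : a.vars = ∅) (hb : b.vars = ∅) :
    (R.conj a b).vars = ∅ := by
  ext x
  simp only [Set.mem_empty_iff_false, iff_false, mem_vars_conj]
  rintro (h | h)
  · rw [ha] at h; exact h
  · rw [hb] at h; exact h

lemma ground_of_vars_empty {t : Term F} (h : t.vars = ∅) : LCTRS.Ground t :=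
  Term.vars_eq_empty_iff.1 h

lemma J_conj_tt (hwf : R.WF) {a b : Term F} (ha : IsLogical R.Fth a)
    (hb : IsLogical R.Fth b) (hga : a.vars = ∅) (hgb : b.vars = ∅)
    (hja : R.J a = R.tt) (hjb : R.J b = R.tt) : R.J (R.conj a b) = R.tt :=
  (hwf.2.2.2.2.2.2.2.2.2.2.1 a b ha hb (ground_of_vars_empty hga)
    (ground_of_vars_empty hgb)).2 ⟨hja, hjb⟩

/-- Everything needed about a "good" element of a big conjunction. -/
def GoodC (R : LCTRS F) (t : Term F) : Prop :=
  IsLogical R.Fth t ∧ t.vars = ∅ ∧ R.J t = R.tt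

lemma goodC_trueT (hwf : R.WF) : GoodC R (R.trueT) :=
  ⟨trueT_logical hwf, by ext x; simpa using mem_vars_trueT x, J_trueT hwf⟩

lemma goodC_conj (hwf : R.WF) {a b : Term F} (ha : GoodC R a) (hb : GoodC R b) :
    GoodC R (R.conj a b) :=
  ⟨conj_logical hwf ha.1 hb.1, conj_ground ha.2.1 hb.2.1,
    J_conj_tt hwf ha.1 hb.1 ha.2.1 hb.2.1 ha.2.2 hb.2.2⟩

lemma goodC_bigConj (hwf : R.WF) {l : List (Term F)} (h : ∀ a ∈ l, GoodC R a) :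
    GoodC R (R.bigConj l) := by
  induction l with
  | nil => exact goodC_trueT hwf
  | cons a l ih =>
      have : R.bigConj (a :: l) = R.conj a (R.bigConj l) := rfl
      rw [this]
      exact goodC_conj hwf (h a (List.mem_cons_self))
        (ih fun b hb => h b (List.mem_cons_of_mem _ hb))

lemma goodC_eq_self (hwf : R.WF) {a : Term F} (ha : IsLogical R.Fth a)
    (hg : a.vars = ∅) : GoodC R (Term.app R.eqS [a, a]) := by
  refine ⟨IsLogical.app hwf.2.2.2.2.2.2.2.2.1.1 ?_, ?_, ?_⟩
  · intro t ht; rcases List.mem_pair.1 ht with rfl | rfl <;> exact ha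
  · ext x
    simp only [Set.mem_empty_iff_false, iff_false, Term.mem_vars_app]
    rintro ⟨t, ht, hx⟩
    rcases List.mem_pair.1 ht with rfl | rfl <;> (rw [hg] at hx; exact hx)
  · exact (hwf.2.2.2.2.2.2.2.2.2.2.2.1 a a ha ha (ground_of_vars_empty hg)
      (ground_of_vars_empty hg)).2 rfl

lemma mem_EVarList_LVar {ρ : Rule F} {x : ℕ} (h : x ∈ EVarList ρ) : x ∈ LVar ρ := by
  rw [EVarList, List.mem_filter] at h
  obtain ⟨h1, h2⟩ := h
  simp only [Bool.not_eq_true', Bool.or_eq_false_iff] at h2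
  refine Or.inr ⟨h1, fun hc => ?_⟩
  have h3 := h2.1
  rw [List.contains_eq_any_beq] at h3
  simp only [List.any_eq_false] at h3
  have := h3 x hc
  simp at this

end Semantics

section Rename

variable {F : Type}

lemma rename_eq_subst (π : ℕ → ℕ) (t : Term F) :
    t.rename π = t.subst (fun x => Term.var (π x)) := rfl

lemma mem_vars_rename {π : ℕ → ℕ} {t : Term F} {x : ℕ} :
    x ∈ (t.rename π).vars ↔ ∃ y ∈ t.vars, π y = x := by
  rw [rename_eq_subst]
  rw [Term.mem_vars_subst]
  constructor
  · rintro ⟨y, hy, hx⟩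
    simp at hx
    exact ⟨y, hy, hx.symm⟩
  · rintro ⟨y, hy, rfl⟩
    exact ⟨y, hy, by simp⟩

lemma rename_rename (π κ : ℕ → ℕ) (t : Term F) :
    (t.rename κ).rename π = t.rename (fun x => π (κ x)) := by
  rw [rename_eq_subst, rename_eq_subst, Term.subst_subst, rename_eq_subst]
  exact Term.subst_ext fun x _ => by simp

lemma rename_symm_cancel (π : ℕ ≃ ℕ) (t : Term F) :
    (t.rename π).rename π.symm = t := by
  rw [rename_rename]
  simp only [Equiv.symm_apply_apply]
  exact t.subst_id

/-- Renaming of a constrained rule. -/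
def ruleRename (π : ℕ → ℕ) (ρ : Rule F) : Rule F :=
  ⟨ρ.lhs.rename π, ρ.rhs.rename π, ρ.cond.rename π⟩

lemma isVariantR_ruleRename (π : ℕ ≃ ℕ) (ρ : Rule F) :
    IsVariantR ρ (ruleRename π ρ) := ⟨π, rfl, rfl, rfl⟩

lemma mem_LVar_ruleRename {π : ℕ ≃ ℕ} {ρ : Rule F} {x : ℕ} :
    x ∈ LVar (ruleRename π ρ) ↔ ∃ y ∈ LVar ρ, π y = x := by
  simp only [LVar, ruleRename, Set.mem_union, Set.mem_diff, mem_vars_rename]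
  constructor
  · rintro (⟨y, hy, rfl⟩ | ⟨⟨y, hy, rfl⟩, hn⟩)
    · exact ⟨y, Or.inl hy, rfl⟩
    · refine ⟨y, Or.inr ⟨hy, fun hc => hn ⟨y, hc, rfl⟩⟩, rfl⟩
  · rintro ⟨y, hy | ⟨hy1, hy2⟩, rfl⟩
    · exact Or.inl ⟨y, hy, rfl⟩
    · refine Or.inr ⟨⟨y, hy1, rfl⟩, ?_⟩
      rintro ⟨z, hz, hzy⟩
      exact hy2 (π.injective hzy ▸ hz)

lemma mem_ruleVars_ruleRename {π : ℕ ≃ ℕ} {ρ : Rule F} {x : ℕ} :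
    x ∈ ruleVars (ruleRename π ρ) ↔ ∃ y ∈ ruleVars ρ, π y = x := by
  simp only [ruleVars, ruleRename, Set.mem_union, mem_vars_rename]
  constructor
  · rintro ((⟨y, hy, rfl⟩ | ⟨y, hy, rfl⟩) | ⟨y, hy, rfl⟩)
    · exact ⟨y, Or.inl (Or.inl hy), rfl⟩
    · exact ⟨y, Or.inl (Or.inr hy), rfl⟩
    · exact ⟨y, Or.inr hy, rfl⟩
  · rintro ⟨y, (hy | hy) | hy, rfl⟩
    · exact Or.inl (Or.inl ⟨y, hy, rfl⟩)
    · exact Or.inl (Or.inr ⟨y, hy, rfl⟩)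
    · exact Or.inr ⟨y, hy, rfl⟩

lemma LVar_subset_ruleVars (ρ : Rule F) : LVar ρ ⊆ ruleVars ρ := by
  rintro x (hx | hx)
  · exact Or.inr hx
  · exact Or.inl (Or.inr hx.1)

end Rename

section Blocks

/-- The involution exchanging `[0, B)` with `[B(i+1), B(i+2))`. -/
def blockPermFun (B i : ℕ) : ℕ → ℕ := fun y =>
  if y < B then y + B * (i + 1)
  else if B * (i + 1) ≤ y ∧ y < B * (i + 1) + B then y - B * (i + 1)
  else y

lemma blockPermFun_invol (B i : ℕ) : ∀ y, blockPermFun B i (blockPermFun B i y) = y := by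
  intro y
  have hB : B ≤ B * (i + 1) := Nat.le_mul_of_pos_right B (Nat.succ_pos i)
  unfold blockPermFun
  split_ifs with h1 h2 h3 h4 h5 h6 h7 <;> omega

/-- The block permutation as an equivalence. -/
def blockPerm (B i : ℕ) : ℕ ≃ ℕ :=
  Function.Involutive.toPerm (blockPermFun B i) (blockPermFun_invol B i)

lemma blockPerm_apply_lt {B i x : ℕ} (hx : x < B) :
    blockPerm B i x = x + B * (i + 1) := by
  simp [blockPerm, Function.Involutive.toPerm, blockPermFun, hx]

lemma blockPerm_mem_block {B i x : ℕ} (hx : x < B) :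
    B * (i + 1) ≤ blockPerm B i x ∧ blockPerm B i x < B * (i + 2) := by
  rw [blockPerm_apply_lt hx]
  have : B * (i + 2) = B * (i + 1) + B := by ring
  omega

/-- Maximum of a list of naturals. -/
def maxVar (l : List ℕ) : ℕ := l.foldr max 0

lemma lt_maxVar_succ {l : List ℕ} {x : ℕ} (h : x ∈ l) : x < maxVar l + 1 := by
  induction l with
  | nil => cases h
  | cons a l ih =>
      rcases List.mem_cons.1 h with rfl | h
      · simp [maxVar]
      · have := ih h
        simp only [maxVar, List.foldr_cons] at *
        omega

/-- A globally injective function agrees with some permutation on a finite set. -/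
lemma exists_perm_agree (f : ℕ → ℕ) (hf : Function.Injective f) (S : Finset ℕ) :
    ∃ π : ℕ ≃ ℕ, ∀ x ∈ S, π x = f x := by
  classical
  induction S using Finset.induction with
  | empty => exact ⟨Equiv.refl ℕ, fun x hx => absurd hx (by simp)⟩
  | @insert a S ha ih =>
      obtain ⟨π, hπ⟩ := ih
      by_cases hpa : π a = f a
      · exact ⟨π, fun x hx => by
          rcases Finset.mem_insert.1 hx with rfl | hx
          · exact hpa
          · exact hπ x hx⟩
      · refine ⟨π.trans (Equiv.swap (f a) (π a)), fun x hx => ?_⟩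
        rcases Finset.mem_insert.1 hx with rfl | hx
        · simp [Equiv.swap_apply_right]
        · have hx1 : π x = f x := hπ x hx
          have hxa : x ≠ a := fun h => ha (h ▸ hx)
          simp only [Equiv.trans_apply, hx1]
          rw [Equiv.swap_apply_of_ne_of_ne]
          · exact fun h => hxa (hf h)
          · intro h
            rw [← hx1] at h
            exact hxa (π.injective h)

end Blocks

section Extract

variable {F : Type} {R : LCTRS F}

/-- The data witnessing that a TRS rule of `R̄` (up to renaming) comes from a
constrained rule of `R_rc`: the base rule, the value substitution and the renaming. -/
def VariantInst (R : LCTRS F) (lr : Term F × Term F)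
    (d : Rule F × (ℕ → Term F) × (ℕ ≃ ℕ)) : Prop :=
  d.1 ∈ R.Rrc ∧ (∀ x ∈ LVar d.1, R.isVal (d.2.1 x)) ∧
  R.validC (d.1.cond.subst d.2.1) ∧
  (∀ x, x ∉ LVar d.1 → d.2.1 x = Term.var x) ∧
  lr.1 = (d.1.lhs.subst d.2.1).rename d.2.2 ∧
  lr.2 = (d.1.rhs.subst d.2.1).rename d.2.2

lemma root_of_Rrc (hwf : R.WF) {ρ : Rule F} (h : ρ ∈ R.Rrc) :
    ∃ f ts, ρ.lhs = Term.app f ts ∧ f ∉ R.Val := by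
  rcases h with h | ⟨f, hf, rfl⟩
  · obtain ⟨⟨f, ts, hl, hf⟩, -⟩ := hwf.2.2.2.2.2.2.2.2.2.2.2.2 ρ h
    exact ⟨f, ts, hl, fun hc => hf.2 (hwf.1 hc)⟩
  · exact ⟨f, _, rfl, hf.2⟩

lemma cond_logical_of_Rrc (hwf : R.WF) {ρ : Rule F} (h : ρ ∈ R.Rrc) :
    IsLogical R.Fth ρ.cond := by
  rcases h with h | ⟨f, hf, rfl⟩
  · exact (hwf.2.2.2.2.2.2.2.2.2.2.2.2 ρ h).2
  · refine IsLogical.app hwf.2.2.2.2.2.2.2.2.1.1 ?_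
    intro t ht
    rcases List.mem_pair.1 ht with rfl | rfl
    · exact IsLogical.var _
    · refine IsLogical.app hf.1 ?_
      intro u hu
      obtain ⟨x, -, rfl⟩ := List.mem_map.1 hu
      exact IsLogical.var _

lemma cond_vars_LVar {ρ : Rule F} : ρ.cond.vars ⊆ LVar ρ := fun x hx => Or.inl hx

/-- Every rule of the transformed TRS, up to a renaming, is a value instance of a
constrained rule of `R_rc`. -/
lemma barTRS_variantInst (hwf : R.WF) {lr lr' : Term F × Term F} (h : lr' ∈ barTRS R)
    (π : ℕ ≃ ℕ) (hvar : lr.1 = lr'.1.rename π ∧ lr.2 = lr'.2.rename π) :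
    ∃ d, VariantInst R lr d := by
  classical
  rcases h with ⟨ρ, hρ, τ, hdom, hval, hvalid, rfl⟩ | ⟨f, hf, vs, hlen, hvs, rfl⟩
  · refine ⟨(ρ, τ, π), Or.inl hρ, hval, hvalid, ?_, hvar.1, hvar.2⟩
    intro x hx
    by_contra hc
    exact hx (hdom ▸ hc)
  · -- calculation instance
    set n := R.arity f with hn
    set tau : ℕ → Term F := fun x =>
      if hx : x < n then Term.app vs[x] []
      else if x = n then Term.app (R.J (Term.app f (vs.map fun v => Term.app v []))) []
      else Term.var x with htau
    have hcalc : R.calcRule f ∈ R.Rrc := Or.inr ⟨f, hf, rfl⟩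
    have hlhsvars : ∀ x ∈ (R.calcRule f).lhs.vars, x < n := by
      intro x hx
      simp only [LCTRS.calcRule] at hx
      rw [Term.mem_vars_app] at hx
      obtain ⟨t, ht, hxt⟩ := hx
      obtain ⟨y, hy, rfl⟩ := List.mem_map.1 ht
      simp at hxt
      subst hxt
      simpa using hy
    have hcondvars : ∀ x ∈ (R.calcRule f).cond.vars, x ≤ n := by
      intro x hx
      simp only [LCTRS.calcRule] at hx
      rw [Term.mem_vars_app] at hx
      obtain ⟨t, ht, hxt⟩ := hx
      rcases List.mem_pair.1 ht with rfl | rfl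
      · simp at hxt; omega
      · rw [Term.mem_vars_app] at hxt
        obtain ⟨u, hu, hxu⟩ := hxt
        obtain ⟨y, hy, rfl⟩ := List.mem_map.1 hu
        simp at hxu
        subst hxu
        have := List.mem_range.1 hy
        omega
    have hLVar : ∀ x ∈ LVar (R.calcRule f), x ≤ n := by
      rintro x (hx | hx)
      · exact hcondvars x hx
      · obtain ⟨hx1, -⟩ := hx
        simp only [LCTRS.calcRule] at hx1
        simp at hx1
        omega
    have hvaltau : ∀ x, x ≤ n → R.isVal (tau x) := by
      intro x hx
      by_cases h1 : x < n
      · exact ⟨vs[x]'(by omega), hvs _ (List.getElem_mem _), by simp [htau, h1]⟩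
      · have hxn : x = n := by omega
        refine ⟨R.J (Term.app f (vs.map fun v => Term.app v [])), hwf.2.2.2.1 _, ?_⟩
        simp [htau, hxn]
    have hlhs : (R.calcRule f).lhs.subst tau = Term.app f (vs.map fun v => Term.app v []) := by
      simp only [LCTRS.calcRule, Term.subst_app, List.map_map]
      congr 1
      refine List.ext_getElem (by simp [hlen, hn]) ?_
      intro i h1 h2
      simp only [List.getElem_map, List.getElem_range]
      have hi : i < n := by simpa using h1
      simp [htau, hi]
    have hrhs : (R.calcRule f).rhs.subst tau
        = Term.app (R.J (Term.app f (vs.map fun v => Term.app v []))) [] := by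
      simp only [LCTRS.calcRule, Term.subst_var]
      simp [htau, hn]
    refine ⟨(R.calcRule f, tau, π), hcalc, fun x hx => hvaltau x (hLVar x hx), ?_, ?_, ?_, ?_⟩
    · -- validity of the instantiated constraint
      have hcond : (R.calcRule f).cond.subst tau =
          Term.app R.eqS [(R.calcRule f).rhs.subst tau, (R.calcRule f).lhs.subst tau] := by
        simp [LCTRS.calcRule, Term.subst_app]
      rw [hcond, hrhs, hlhs]
      set a := Term.app (R.J (Term.app f (vs.map fun v => Term.app v []))) [] with ha
      set b := Term.app f (vs.map fun v => Term.app v []) with hb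
      have hga : a.vars = ∅ := by ext x; simp [ha, Term.mem_vars_iff]
      have hgb : b.vars = ∅ := by
        ext x
        simp only [Set.mem_empty_iff_false, iff_false, hb, Term.mem_vars_app]
        rintro ⟨t, ht, hxt⟩
        obtain ⟨v, -, rfl⟩ := List.mem_map.1 ht
        simp [Term.mem_vars_iff] at hxt
      have hla : IsLogical R.Fth a := IsLogical.app (hwf.1 (hwf.2.2.2.1 _)) (by simp)
      have hlb : IsLogical R.Fth b := by
        refine IsLogical.app hf.1 ?_
        intro t ht
        obtain ⟨v, hv, rfl⟩ := List.mem_map.1 ht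
        exact IsLogical.app (hwf.1 (hvs v hv)) (by simp)
      refine validC_of_ground_tt (t := Term.app R.eqS [a, b]) ?_ ?_
      · intro x hx
        rw [Term.mem_vars_app] at hx
        obtain ⟨t, ht, hxt⟩ := hx
        rcases List.mem_pair.1 ht with rfl | rfl
        · rw [hga] at hxt; exact hxt
        · rw [hgb] at hxt; exact hxt
      · refine (hwf.2.2.2.2.2.2.2.2.2.2.2.1 a b hla hlb (ground_of_vars_empty hga)
          (ground_of_vars_empty hgb)).2 ?_
        rw [ha, hb]
        exact hwf.2.2.2.2.1 _ (hwf.2.2.2.1 _)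
    · intro x hx
      have h1 : ¬ x < n := fun hc => hx (Or.inl (by
        simp only [LCTRS.calcRule]
        rw [Term.mem_vars_app]
        refine ⟨Term.app f ((List.range n).map Term.var), by simp [hn], ?_⟩
        rw [Term.mem_vars_app]
        exact ⟨Term.var x, List.mem_map.2 ⟨x, List.mem_range.2 hc, rfl⟩, by simp⟩))
      have h2 : x ≠ n := fun hc => hx (Or.inl (by
        simp only [LCTRS.calcRule]
        rw [Term.mem_vars_app]
        exact ⟨Term.var n, by simp [hn], by simp [hc]⟩))
      simp [htau, h1, h2]
    · rw [hvar.1, hlhs]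
    · rw [hvar.2, hrhs]

end Extract

section MoreAux

variable {F : Type} {R : LCTRS F}

lemma Term.vars_subtermAt {t w : Term F} {p : List ℕ} (h : t.subtermAt p = some w) :
    w.vars ⊆ t.vars := by
  induction p generalizing t with
  | nil => simp at h; subst h; exact fun x hx => hx
  | cons i p ih =>
      cases t with
      | var x => rw [Term.subtermAt] at h; cases h
      | app f ts =>
          rw [Term.subtermAt_cons_app] at h
          cases hts : ts[i]? with
          | none => rw [hts] at h; cases h
          | some ti =>
              rw [hts] at h
              exact fun x hx => Term.mem_vars_app.2
                ⟨ti, by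
                  have := List.getElem?_eq_some_iff.1 hts
                  obtain ⟨hlt, hget⟩ := this
                  exact hget ▸ List.getElem_mem hlt, ih h hx⟩

lemma Term.isFun_subst {t : Term F} (h : t.isFun) (σ : ℕ → Term F) : (t.subst σ).isFun := by
  cases t with
  | var x => exact absurd h (by simp [Term.isFun])
  | app f ts => rw [Term.subst_app]; trivial

lemma val_or_var_of_subst_isVal {u : Term F} {δ : ℕ → Term F}
    (h : R.isVal (u.subst δ)) : R.isVal u ∨ ∃ y, u = Term.var y := by
  cases u with
  | var y => exact Or.inr ⟨y, rfl⟩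
  | app f ts =>
      obtain ⟨v, hv, heq⟩ := h
      rw [Term.subst_app] at heq
      obtain ⟨h1, h2⟩ := Term.app.inj heq
      cases ts with
      | nil => exact Or.inl ⟨v, hv, by rw [h1]⟩
      | cons a ts' => simp at h2

lemma isVal_of_mem_vars_subst_isVal {u : Term F} {δ : ℕ → Term F}
    (h : R.isVal (u.subst δ)) : ∀ y ∈ u.vars, R.isVal (δ y) := by
  intro y hy
  rcases val_or_var_of_subst_isVal (R := R) h with hval | ⟨z, rfl⟩
  · have := isVal_vars hval
    rw [this] at hy
    cases hy
  · simp at hy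
    subst hy
    simpa using h

lemma EC_subst (ρ : Rule F) (θ : ℕ → Term F) :
    (R.EC ρ).subst θ
      = R.bigConj ((EVarList ρ).map fun x => Term.app R.eqS [θ x, θ x]) := by
  rw [LCTRS.EC, subst_bigConj, List.map_map]
  congr 1
  refine List.map_congr_left fun x _ => ?_
  simp

lemma mem_vars_EC {ρ : Rule F} {x : ℕ} (h : x ∈ (R.EC ρ).vars) : x ∈ EVarList ρ := by
  rw [LCTRS.EC, mem_vars_bigConj] at h
  obtain ⟨a, ha, hx⟩ := h
  obtain ⟨y, hy, rfl⟩ := List.mem_map.1 ha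
  rw [Term.mem_vars_app] at hx
  obtain ⟨u, hu, hxu⟩ := hx
  rcases List.mem_pair.1 hu with rfl | rfl <;> (simp at hxu; subst hxu; exact hy)

lemma Rule.ext' {F : Type} {ρ₁ ρ₂ : Rule F} (h1 : ρ₁.lhs = ρ₂.lhs)
    (h2 : ρ₁.rhs = ρ₂.rhs) (h3 : ρ₁.cond = ρ₂.cond) : ρ₁ = ρ₂ := by
  cases ρ₁; cases ρ₂; simp_all

/-- All the variables of a rule, as a list. -/
def varsRL (ρ : Rule F) : List ℕ :=
  ρ.lhs.varsList ++ ρ.rhs.varsList ++ ρ.cond.varsList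

lemma mem_varsRL {ρ : Rule F} {x : ℕ} : x ∈ varsRL ρ ↔ x ∈ ruleVars ρ := by
  simp only [varsRL, List.mem_append, ruleVars, Set.mem_union]
  rfl

lemma Term.subtermAt_var_cons {x i : ℕ} {q : List ℕ} :
    (Term.var (F := F) x).subtermAt (i :: q) = none := by
  rw [Term.subtermAt]

lemma mem_ofFn' {α : Type*} {n : ℕ} {f : Fin n → α} {a : α} (h : a ∈ List.ofFn f) :
    ∃ i, f i = a := List.mem_ofFn.1 h

lemma subtermAt_value_cons {v : F} {i : ℕ} {q : List ℕ} :
    (Term.app v ([] : List (Term F))).subtermAt (i :: q) = none := by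
  rw [Term.subtermAt_cons_app]
  simp

end MoreAux


/-- For every parallel critical pair `s ≈ t` of the transformed
TRS `R̄` there exist a constrained parallel critical pair `s′ ≈ t′ [φ′]` of the
LCTRS `R` and a substitution `γ` such that `s = s′γ`, `t = t′γ` and `γ ⊨ φ′`. -/
theorem pcp_of_barTRS_from_cpcp {F : Type} (R : LCTRS F) (hwf : R.WF) :
    ∀ (Ps : List (List ℕ)) (lsig s t : Term F), IsPCP (barTRS R) Ps lsig s t →
      ∃ (Ps' : List (List ℕ)) (lsig' s' t' φ' : Term F) (γ : ℕ → Term F),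
        IsCPCP R Ps' lsig' s' t' φ' ∧ s = s'.subst γ ∧ t = t'.subst γ ∧
        R.respectsC γ φ' := by
  classical
  intro Ps lsig s t hPCP
  obtain ⟨l, r, prs, σT, hPs, hne, hparPs, ⟨lr0, hlr0, π0T, hv0⟩, hprules, hpdisj,
    hdisj0, hex, hunif, hmguT, hroot, hlsig, hrepl, ht⟩ := hPCP
  -- extract constrained data for the main rule and all the overlapping rules
  obtain ⟨d0, hd0⟩ := barTRS_variantInst hwf hlr0 π0T hv0
  have hv0l : l = lr0.1.rename π0T := hv0.1
  have hv0r : r = lr0.2.rename π0T := hv0.2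
  set k := prs.length with hk
  have hgetmem : ∀ j : Fin k, prs.get j ∈ prs := fun j => List.get_mem prs j
  have hch : ∀ j : Fin k, ∃ d, VariantInst R (prs.get j).2 d := by
    intro j
    obtain ⟨lr, hlr, π, h1, h2⟩ := hprules _ (hgetmem j)
    exact barTRS_variantInst hwf hlr π ⟨h1, h2⟩
  choose dat hdat using hch
  -- a bound on all variables of the base rules
  set B : ℕ := maxVar (varsRL d0.1
      ++ (List.finRange k).flatMap fun j => varsRL (dat j).1) + 1 with hB
  have hB1 : 1 ≤ B := by omega
  have hBd0 : ∀ x ∈ ruleVars d0.1, x < B := by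
    intro x hx
    exact lt_maxVar_succ (List.mem_append.2 (Or.inl (mem_varsRL.2 hx)))
  have hBdat : ∀ (j : Fin k) (x : ℕ), x ∈ ruleVars (dat j).1 → x < B := by
    intro j x hx
    refine lt_maxVar_succ (List.mem_append.2 (Or.inr ?_))
    exact List.mem_flatMap.2 ⟨j, List.mem_finRange j, mem_varsRL.2 hx⟩
  -- indexed data access (index 0 is the main rule, index j+1 the j-th overlap rule)
  set DN : ℕ → Rule F × (ℕ → Term F) × (ℕ ≃ ℕ) := fun i =>
    if h : i = 0 then d0 else
      if h2 : i - 1 < k then dat ⟨i - 1, h2⟩ else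
        ⟨⟨Term.var 0, Term.var 0, Term.var 0⟩, Term.var, Equiv.refl ℕ⟩ with hDN
  have hDN0 : DN 0 = d0 := by simp [hDN]
  have hDNj : ∀ j : Fin k, DN (j + 1) = dat j := by
    intro j
    simp [hDN]
  have hDNvi : ∀ i, i < k + 1 → ∃ lr : Term F × Term F, VariantInst R lr (DN i) ∧
      (i = 0 → lr = (l, r)) ∧ (∀ j : Fin k, i = j + 1 → lr = (prs.get j).2) := by
    intro i hi
    cases i with
    | zero => exact ⟨(l, r), hDN0 ▸ hd0, fun _ => rfl, fun j h => absurd h (by omega)⟩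
    | succ j =>
        have hj : j < k := by omega
        refine ⟨(prs.get ⟨j, hj⟩).2, hDNj ⟨j, hj⟩ ▸ hdat ⟨j, hj⟩, fun h => absurd h (by omega),
          fun j' h => ?_⟩
        have : j = (j' : ℕ) := by omega
        subst this
        rfl
  have hBDN : ∀ i, i < k + 1 → ∀ x ∈ ruleVars (DN i).1, x < B := by
    intro i hi x hx
    cases i with
    | zero => exact hBd0 x (hDN0 ▸ hx)
    | succ j => exact hBdat ⟨j, by omega⟩ x (hDNj ⟨j, by omega⟩ ▸ hx)
  -- block renamings and the combined TRS-level substitution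
  set ren : ℕ → ℕ ≃ ℕ := fun i => blockPerm B i with hren
  set θ : ℕ → Term F := fun y =>
    if B ≤ y ∧ y < B * (k + 2) then
      (if (y % B) ∈ LVar (DN (y / B - 1)).1 then (DN (y / B - 1)).2.1 (y % B)
       else σT ((DN (y / B - 1)).2.2 (y % B)))
    else Term.var y with hθ
  have hθren : ∀ i, i < k + 1 → ∀ x, x < B →
      θ ((ren i) x) = (if x ∈ LVar (DN i).1 then (DN i).2.1 x else σT ((DN i).2.2 x)) := by
    intro i hi x hx
    have h1 : (ren i) x = x + B * (i + 1) := blockPerm_apply_lt hx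
    have h2 : B ≤ B * (i + 1) := Nat.le_mul_of_pos_right B (Nat.succ_pos i)
    have h3 : B * (i + 2) ≤ B * (k + 2) := Nat.mul_le_mul_left B (by omega)
    have h4 : B * (i + 2) = B * (i + 1) + B := by ring
    have hcond : B ≤ x + B * (i + 1) ∧ x + B * (i + 1) < B * (k + 2) := by omega
    have hdiv : (x + B * (i + 1)) / B - 1 = i := by
      rw [Nat.add_mul_div_left x (i + 1) (by omega)]
      rw [Nat.div_eq_of_lt hx]
      omega
    have hmod : (x + B * (i + 1)) % B = x := by
      rw [Nat.add_mul_mod_self_left]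
      exact Nat.mod_eq_of_lt hx
    rw [hθ]
    simp only [h1, hcond, and_self, if_true, hdiv, hmod]
  -- the "μ" substitution of a data item
  set mu : Rule F × (ℕ → Term F) × (ℕ ≃ ℕ) → ℕ → Term F := fun d x =>
    if x ∈ LVar d.1 then d.2.1 x else Term.var (d.2.2 x) with hmuDef
  have hmu : ∀ (lr : Term F × Term F) d, VariantInst R lr d →
      ∀ u : Term F, (u.subst d.2.1).rename d.2.2 = u.subst (mu d) := by
    intro lr d hd u
    rw [rename_eq_subst, Term.subst_subst]
    refine Term.subst_ext fun x _ => ?_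
    by_cases hx : x ∈ LVar d.1
    · rw [hmuDef]
      simp only [hx, if_true]
      exact isVal_subst (hd.2.1 x hx) _
    · rw [hd.2.2.2.1 x hx, hmuDef]
      simp [hx]
  -- the bridge between renamed base terms under θ and μ-instances under σT
  have hbridge : ∀ i, i < k + 1 → ∀ (u : Term F), (∀ x ∈ u.vars, x < B) →
      (u.rename (ren i)).subst θ = (u.subst (mu (DN i))).subst σT := by
    intro i hi u hu
    rw [rename_eq_subst, Term.subst_subst, Term.subst_subst]
    refine Term.subst_ext fun x hx => ?_
    rw [Term.subst_var, hθren i hi x (hu x hx), hmuDef]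
    obtain ⟨lr, hvi, -⟩ := hDNvi i hi
    by_cases hxl : x ∈ LVar (DN i).1
    · simp only [hxl, if_true]
      exact (isVal_subst (hvi.2.1 x hxl) σT).symm
    · simp [hxl]
  -- the instantiated left- and right-hand sides at the TRS level
  have hl : l = d0.1.lhs.subst (mu d0) := by
    have h1 : l = (d0.1.lhs.subst d0.2.1).rename d0.2.2 := hd0.2.2.2.2.1
    rw [h1]
    exact hmu _ _ hd0 _
  have hr : r = d0.1.rhs.subst (mu d0) := by
    have h1 : r = (d0.1.rhs.subst d0.2.1).rename d0.2.2 := hd0.2.2.2.2.2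
    rw [h1]
    exact hmu _ _ hd0 _
  have hlp : ∀ j : Fin k, (prs.get j).2.1 = (dat j).1.lhs.subst (mu (dat j)) := by
    intro j
    rw [(hdat j).2.2.2.2.1]
    exact hmu _ _ (hdat j) _
  have hrp : ∀ j : Fin k, (prs.get j).2.2 = (dat j).1.rhs.subst (mu (dat j)) := by
    intro j
    rw [(hdat j).2.2.2.2.2]
    exact hmu _ _ (hdat j) _
  -- each overlap position is a function position of the base left-hand side
  have hposw : ∀ j : Fin k, ∃ w, d0.1.lhs.subtermAt (prs.get j).1 = some w ∧ w.isFun ∧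
      l.subtermAt (prs.get j).1 = some (w.subst (mu d0)) := by
    intro j
    obtain ⟨u, hu, hufun⟩ := hex _ (hgetmem j)
    rw [hl] at hu
    rcases Term.subtermAt_subst_cases hu with ⟨w, hw, rfl⟩ | ⟨x, q, p', hpq, hp'ne, hq, hp'⟩
    · -- position inside the base lhs
      cases hwc : w with
      | var x =>
          subst hwc
          exfalso
          by_cases hx : x ∈ LVar d0.1
          · -- the subterm is a value: head clash with the unifier
            have huval : R.isVal ((Term.var x).subst (mu d0)) := by
              rw [Term.subst_var, hmuDef]
              simp only [hx, if_true]
              exact hd0.2.1 x hx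
            obtain ⟨v, hv, hveq⟩ := huval
            have huni := hunif _ (hgetmem j) _ (by rw [hl]; exact hu)
            rw [Unifies, hlp j, hveq] at huni
            obtain ⟨f, ts, hfts, hfval⟩ := root_of_Rrc hwf (hdat j).1
            rw [hfts] at huni
            rw [Term.subst_subst, Term.subst_app, Term.subst_app] at huni
            obtain ⟨h1, h2⟩ := Term.app.inj huni
            exact hfval (h1 ▸ hv)
          · rw [Term.subst_var] at hufun
            simp only [hmuDef] at hufun
            rw [if_neg hx] at hufun
            exact hufun
      | app f ts => exact ⟨w, hwc ▸ hw, hwc ▸ trivial, by rw [hl]; exact hwc ▸ hu⟩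
    · -- position inside a value of the substitution: impossible
      exfalso
      simp only [hmuDef] at hp'
      by_cases hx : x ∈ LVar d0.1
      · simp only [hx, if_true] at hp'
        obtain ⟨v, hv, hveq⟩ := hd0.2.1 x hx
        rw [hveq] at hp'
        cases p' with
        | nil => exact hp'ne rfl
        | cons i q' => rw [subtermAt_value_cons] at hp'; cases hp'
      · rw [if_neg hx] at hp'
        cases p' with
        | nil => exact hp'ne rfl
        | cons i q' => rw [Term.subtermAt_var_cons] at hp'; cases hp'
  choose w hw hwfun hwl using hposw
  -- the unification problem and its most general unifier
  set E : List (Term F × Term F) := List.ofFn (fun j : Fin k =>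
    ((ruleRename (ren (j + 1)) (dat j).1).lhs, (w j).rename (ren 0))) with hE
  have hθE : UnifiesE θ E := by
    rintro e he
    obtain ⟨j, rfl⟩ := mem_ofFn' he
    show ((dat j).1.lhs.rename (ren (j + 1))).subst θ = ((w j).rename (ren 0)).subst θ
    rw [hbridge (j + 1) (by omega) _ (fun x hx => hBdat j x (Or.inl (Or.inl hx)))]
    rw [hbridge 0 (by omega) _ (fun x hx =>
      hBd0 x (Or.inl (Or.inl (Term.vars_subtermAt (hw j) hx))))]
    rw [hDNj j, hDN0]
    have huni := hunif _ (hgetmem j) _ (hwl j)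
    rw [Unifies, hlp j] at huni
    exact huni
  obtain ⟨σ', hσunif, hσgen⟩ := mgu_exists (varsE E).card (sizeE E) E le_rfl le_rfl ⟨θ, hθE⟩
  obtain ⟨δ, hδ⟩ := hσgen θ hθE
  have hcomp : ∀ u : Term F, (u.subst σ').subst δ = u.subst θ := by
    intro u
    rw [Term.subst_subst]
    exact Term.subst_ext fun x _ => hδ x
  -- values of θ on logical variables of the renamed rules
  have hθLVar : ∀ i, i < k + 1 → ∀ x, x ∈ LVar (ruleRename (ren i) (DN i).1) →
      R.isVal (θ x) := by
    intro i hi x hx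
    obtain ⟨y, hy, rfl⟩ := mem_LVar_ruleRename.1 hx
    have hyB : y < B := hBDN i hi y (LVar_subset_ruleVars _ hy)
    rw [hθren i hi y hyB, if_pos hy]
    obtain ⟨lr, hvi, -⟩ := hDNvi i hi
    exact hvi.2.1 y hy
  -- block bounds for the renamed rules, and disjointness
  have hblock : ∀ i, i < k + 1 → ∀ x, x ∈ ruleVars (ruleRename (ren i) (DN i).1) →
      B * (i + 1) ≤ x ∧ x < B * (i + 2) := by
    intro i hi x hx
    obtain ⟨y, hy, rfl⟩ := mem_ruleVars_ruleRename.1 hx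
    exact blockPerm_mem_block (hBDN i hi y hy)
  have hdisjblocks : ∀ i i', i < k + 1 → i' < k + 1 → i ≠ i' →
      ruleVars (ruleRename (ren i) (DN i).1) ∩ ruleVars (ruleRename (ren i') (DN i').1)
        = ∅ := by
    have key : ∀ i i', i < k + 1 → i' < k + 1 → i < i' →
        ruleVars (ruleRename (ren i) (DN i).1) ∩ ruleVars (ruleRename (ren i') (DN i').1)
          = ∅ := by
      intro i i' hi hi' hii
      ext x
      simp only [Set.mem_inter_iff, Set.mem_empty_iff_false, iff_false, not_and]
      intro h1 h2
      have b1 := hblock i hi x h1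
      have b2 := hblock i' hi' x h2
      have hm : B * (i + 2) ≤ B * (i' + 1) := Nat.mul_le_mul_left B (by omega)
      omega
    intro i i' hi hi' hii
    rcases Nat.lt_or_ge i i' with h | h
    · exact key i i' hi hi' h
    · have h2 : i' < i := by omega
      rw [Set.inter_comm]
      exact key i' i hi' hi h2
  -- semantics of the instantiated constraints
  have hcondGood : ∀ i, i < k + 1 →
      ((ruleRename (ren i) (DN i).1).cond).subst θ = (DN i).1.cond.subst (DN i).2.1 ∧
      GoodC R ((DN i).1.cond.subst (DN i).2.1) := by
    intro i hi
    obtain ⟨lr, hvi, -⟩ := hDNvi i hi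
    have hvars : ∀ x ∈ (DN i).1.cond.vars, x < B := fun x hx =>
      hBDN i hi x (Or.inr hx)
    have hground : ((DN i).1.cond.subst (DN i).2.1).vars = ∅ :=
      vars_subst_empty fun x hx => isVal_vars (hvi.2.1 x (cond_vars_LVar hx))
    constructor
    · show ((DN i).1.cond.rename (ren i)).subst θ = _
      rw [hbridge i hi _ hvars]
      have heq : (DN i).1.cond.subst (mu (DN i)) = (DN i).1.cond.subst (DN i).2.1 :=
        Term.subst_ext fun x hx => by
          simp only [hmuDef]
          rw [if_pos (cond_vars_LVar hx)]
      rw [heq, Term.subst_ground hground]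
    · exact ⟨isLogical_subst (cond_logical_of_Rrc hwf hvi.1)
        (fun x hx => isVal_logical hwf (hvi.2.1 x (cond_vars_LVar hx))), hground,
        J_tt_of_validC_ground hground hvi.2.2.1⟩
  have hECGood : ∀ i, i < k + 1 →
      GoodC R ((R.EC (ruleRename (ren i) (DN i).1)).subst θ) := by
    intro i hi
    rw [EC_subst]
    refine goodC_bigConj hwf ?_
    intro a ha
    obtain ⟨x, hx, rfl⟩ := List.mem_map.1 ha
    have hval : R.isVal (θ x) := hθLVar i hi x (mem_EVarList_LVar hx)
    exact goodC_eq_self hwf (isVal_logical hwf hval) (isVal_vars hval)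
  -- the witnesses
  set ρc : Rule F := ruleRename (ren 0) (DN 0).1 with hρc
  set prs' : List (List ℕ × Rule F) := List.ofFn (fun j : Fin k =>
    ((prs.get j).1, ruleRename (ren (j + 1)) (DN (j + 1)).1)) with hprs'
  have hps'map : prs'.map (·.1) = Ps := by
    rw [hprs', List.map_ofFn]
    rw [hPs]
    refine List.ext_getElem (by simp [hk]) ?_
    intro i h1 h2
    simp [List.getElem_map]
  have hsub' : ∀ j : Fin k, ρc.lhs.subtermAt (prs.get j).1
      = some ((w j).rename (ren 0)) := by
    intro j
    rw [hρc, hDN0]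
    exact Term.subtermAt_subst (hw j) _
  have hprs'get : ∀ j : Fin k, ((prs.get j).1, ruleRename (ren (j + 1)) (DN (j + 1)).1)
      ∈ prs' := by
    intro j
    rw [hprs']
    exact List.mem_ofFn.2 ⟨j, rfl⟩
  have hEmem : ∀ j : Fin k, ((ruleRename (ren (j + 1)) (dat j).1).lhs,
      (w j).rename (ren 0)) ∈ E := by
    intro j
    rw [hE]
    exact List.mem_ofFn.2 ⟨j, rfl⟩
  -- the resulting constrained terms
  have hposrepl : ∀ pu ∈ prs'.map (fun pr => (pr.1, pr.2.rhs.subst σ')),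
      ∃ w', (ρc.lhs.subst σ').subtermAt pu.1 = some w' := by
    intro pu hpu
    obtain ⟨pr, hpr, rfl⟩ := List.mem_map.1 hpu
    rw [hprs'] at hpr
    obtain ⟨j, rfl⟩ := mem_ofFn' hpr
    exact ⟨_, Term.subtermAt_subst (hsub' j) σ'⟩
  have hparmap : ((prs'.map fun pr => (pr.1, pr.2.rhs.subst σ')).map (·.1)).Pairwise
      ParallelPos := by
    rw [List.map_map]
    rw [show ((fun x => x.1) ∘ fun pr => ((pr : List ℕ × Rule F).1, pr.2.rhs.subst σ'))
      = (fun x => x.1) from rfl, hps'map]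
    exact hparPs
  obtain ⟨s', hs'⟩ := replaceAll_exists hposrepl hparmap
  set Φ : Term F := R.conj (ρc.cond.subst σ')
    (R.conj ((R.conj (R.EC ρc) (R.bigConj (prs'.map fun pr => R.EC pr.2))).subst σ')
      (R.bigConj (prs'.map fun pr => pr.2.cond.subst σ'))) with hΦ
  -- values of δ on the variables of the constraint
  have hvalδ : ∀ (u : Term F), (∀ x ∈ u.vars, R.isVal (θ x)) →
      ∀ y ∈ (u.subst σ').vars, R.isVal (δ y) := by
    intro u hu y hy
    obtain ⟨x, hx, hyx⟩ := Term.mem_vars_subst.1 hy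
    have hval : R.isVal ((σ' x).subst δ) := by
      rw [hδ x]
      exact hu x hx
    exact isVal_of_mem_vars_subst_isVal hval y hyx
  have hvalsΦ : ∀ y ∈ Φ.vars, R.isVal (δ y) := by
    intro y hy
    rw [hΦ] at hy
    rcases mem_vars_conj.1 hy with h | h
    · exact hvalδ ρc.cond (fun x hx => hθLVar 0 (by omega) x (cond_vars_LVar hx)) y h
    · rcases mem_vars_conj.1 h with h | h
      · refine hvalδ _ ?_ y h
        intro x hx
        rcases mem_vars_conj.1 hx with hx | hx
        · exact hθLVar 0 (by omega) x (mem_EVarList_LVar (mem_vars_EC hx))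
        · rw [mem_vars_bigConj] at hx
          obtain ⟨a, ha, hxa⟩ := hx
          obtain ⟨pr, hpr, rfl⟩ := List.mem_map.1 ha
          rw [hprs'] at hpr
          obtain ⟨j, rfl⟩ := mem_ofFn' hpr
          exact hθLVar ((j : ℕ) + 1) (by omega) x (mem_EVarList_LVar (mem_vars_EC hxa))
      · rw [mem_vars_bigConj] at h
        obtain ⟨a, ha, hya⟩ := h
        obtain ⟨pr, hpr, rfl⟩ := List.mem_map.1 ha
        rw [hprs'] at hpr
        obtain ⟨j, rfl⟩ := mem_ofFn' hpr
        exact hvalδ _ (fun x hx => hθLVar ((j : ℕ) + 1) (by omega) x (cond_vars_LVar hx))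
          y hya
  -- the three pieces of the constraint are good after applying δ
  have g1 : GoodC R ((ρc.cond.subst σ').subst δ) := by
    rw [hcomp, (hcondGood 0 (by omega)).1]
    exact (hcondGood 0 (by omega)).2
  have g2 : GoodC R (((R.conj (R.EC ρc) (R.bigConj (prs'.map fun pr => R.EC pr.2))).subst
      σ').subst δ) := by
    rw [hcomp, subst_conj]
    refine goodC_conj hwf (hECGood 0 (by omega)) ?_
    rw [subst_bigConj, List.map_map]
    refine goodC_bigConj hwf ?_
    intro a ha
    obtain ⟨pr, hpr, rfl⟩ := List.mem_map.1 ha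
    rw [hprs'] at hpr
    obtain ⟨j, rfl⟩ := mem_ofFn' hpr
    exact hECGood ((j : ℕ) + 1) (by omega)
  have g3 : GoodC R ((R.bigConj (prs'.map fun pr => pr.2.cond.subst σ')).subst δ) := by
    rw [subst_bigConj, List.map_map]
    refine goodC_bigConj hwf ?_
    intro a ha
    obtain ⟨pr, hpr, rfl⟩ := List.mem_map.1 ha
    rw [hprs'] at hpr
    obtain ⟨j, rfl⟩ := mem_ofFn' hpr
    show GoodC R (((ruleRename (ren ((j : ℕ) + 1)) (DN ((j : ℕ) + 1)).1).cond.subst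
      σ').subst δ)
    rw [hcomp, (hcondGood ((j : ℕ) + 1) (by omega)).1]
    exact (hcondGood ((j : ℕ) + 1) (by omega)).2
  -- transfer of the instantiated terms along δ
  have hlsigδ : (ρc.lhs.subst σ').subst δ = lsig := by
    rw [hcomp]
    show ((DN 0).1.lhs.rename (ren 0)).subst θ = lsig
    rw [hbridge 0 (by omega) _ (fun x hx => hBDN 0 (by omega) x (Or.inl (Or.inl hx)))]
    rw [hDN0, ← hl, ← hlsig]
  have htδ : (ρc.rhs.subst σ').subst δ = r.subst σT := by
    rw [hcomp]
    show ((DN 0).1.rhs.rename (ren 0)).subst θ = _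
    rw [hbridge 0 (by omega) _ (fun x hx => hBDN 0 (by omega) x (Or.inl (Or.inr hx)))]
    rw [hDN0, ← hr]
  refine ⟨Ps, ρc.lhs.subst σ', s', ρc.rhs.subst σ', Φ, δ,
    ⟨ρc, prs', σ', hps'map.symm, hne, hparPs, ?_, ?_, ?_, ?_, ?_, ?_, ?_, ?_, ?_, ?_,
      rfl, hs', rfl, hΦ⟩, ?_, ?_, ?_, ?_⟩
  · -- 4: ρc is a variant of a rule in Rrc
    exact ⟨d0.1, hDN0 ▸ hd0.1, isVariantR_ruleRename _ _⟩
  · -- 5: every overlap rule is a variant of a rule in Rrc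
    intro pr hpr
    rw [hprs'] at hpr
    obtain ⟨j, rfl⟩ := mem_ofFn' hpr
    exact ⟨(DN (j + 1)).1, hDNj j ▸ (hdat j).1, isVariantR_ruleRename _ _⟩
  · -- 6: pairwise variable disjointness
    rw [hprs', List.pairwise_iff_getElem]
    intro i j h1 h2 hij
    rw [List.length_ofFn] at h1 h2
    simp only [List.getElem_ofFn]
    exact hdisjblocks (i + 1) (j + 1) (by omega) (by omega) (by omega)
  · -- 7: disjointness from the main rule
    intro pr hpr
    rw [hprs'] at hpr
    obtain ⟨j, rfl⟩ := mem_ofFn' hpr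
    exact hdisjblocks 0 ((j : ℕ) + 1) (by omega) (by omega) (by omega)
  · -- 8: overlap positions are function positions
    intro pr hpr
    rw [hprs'] at hpr
    obtain ⟨j, rfl⟩ := mem_ofFn' hpr
    refine ⟨(w j).rename (ren 0), hsub' j, ?_⟩
    have := Term.isFun_subst (hwfun j) (fun x => Term.var ((ren 0) x))
    exact this
  · -- 9: σ' unifies the overlap equations
    intro pr hpr u hu
    rw [hprs'] at hpr
    obtain ⟨j, rfl⟩ := mem_ofFn' hpr
    have hu2 := (hsub' j).symm.trans hu
    have hu3 : u = (w j).rename (ren 0) := (Option.some.inj hu2).symm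
    subst hu3
    have := hσunif _ (hEmem j)
    rw [hDNj j]
    exact this
  · -- 10: most generality
    intro θ' hθ'
    refine hσgen θ' ?_
    intro e he
    rw [hE] at he
    obtain ⟨j, rfl⟩ := mem_ofFn' he
    have h2 := hθ' _ (hprs'get j) _ (hsub' j)
    show ((ruleRename (ren ((j : ℕ) + 1)) (dat j).1).lhs).subst θ'
      = ((w j).rename (ren 0)).subst θ'
    rw [← hDNj j]
    exact h2
  · -- 11: σ' maps logical variables to values or variables
    intro x hx
    have hval : R.isVal (θ x) := by
      rcases hx with hx | ⟨pr, hpr, hx⟩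
      · exact hθLVar 0 (by omega) x hx
      · rw [hprs'] at hpr
        obtain ⟨j, rfl⟩ := mem_ofFn' hpr
        exact hθLVar (j + 1) (by omega) x hx
    rw [← hδ x] at hval
    exact val_or_var_of_subst_isVal hval
  · -- 12: satisfiability
    set γw : ℕ → Term F := fun y => if R.isVal (δ y) then δ y else R.trueT with hγw
    have hγwval : ∀ y, R.isVal (γw y) := by
      intro y
      simp only [hγw]
      by_cases h : R.isVal (δ y)
      · rw [if_pos h]; exact h
      · rw [if_neg h]; exact ⟨R.tt, hwf.2.2.2.2.2.1, rfl⟩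
    refine ⟨γw, fun y _ => hγwval y, ?_⟩
    set Ψ : Term F := R.conj (ρc.cond.subst σ')
      (R.bigConj (prs'.map fun pr => pr.2.cond.subst σ')) with hΨ
    have hΨΦ : ∀ y ∈ Ψ.vars, y ∈ Φ.vars := by
      intro y hy
      rw [hΨ] at hy
      rw [hΦ]
      rcases mem_vars_conj.1 hy with h | h
      · exact mem_vars_conj.2 (Or.inl h)
      · exact mem_vars_conj.2 (Or.inr (mem_vars_conj.2 (Or.inr h)))
    have heq : Ψ.subst γw = Ψ.subst δ := Term.subst_ext fun y hy => by
      simp only [hγw]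
      rw [if_pos (hvalsΦ y (hΨΦ y hy))]
    have heq2 : Ψ.subst δ = R.conj ((ρc.cond.subst σ').subst δ)
        ((R.bigConj (prs'.map fun pr => pr.2.cond.subst σ')).subst δ) := by
      rw [hΨ, subst_conj]
    rw [heq, heq2]
    exact (goodC_conj hwf g1 g3).2.2
  · -- 13: root overlap condition
    intro ρε hpeq
    by_contra hcon
    push_neg at hcon
    obtain ⟨hvar, hsubv⟩ := hcon
    have hk1 : k = 1 := by
      have hlen := congrArg List.length hpeq
      simpa [hprs'] using hlen
    set j0 : Fin k := ⟨0, by omega⟩ with hj0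
    have h00 : ((prs.get j0).1, ruleRename (ren ((j0 : ℕ) + 1)) (DN ((j0 : ℕ) + 1)).1)
        ∈ prs' := hprs'get j0
    rw [hpeq, List.mem_singleton] at h00
    have hp0 : (prs.get j0).1 = [] := congrArg Prod.fst h00
    have hρε : ρε = ruleRename (ren ((j0 : ℕ) + 1)) (dat j0).1 := by
      have := congrArg Prod.snd h00
      rw [hDNj j0] at this
      exact this.symm
    have hρc2 : ρc = ruleRename (ren 0) d0.1 := by rw [hρc, hDN0]
    obtain ⟨πh, hπl, hπr, hπc⟩ := hvar
    set renε : ℕ ≃ ℕ := ren ((j0 : ℕ) + 1) with hrenε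
    set κ : ℕ ≃ ℕ := (renε.trans πh).trans (ren 0).symm with hκ
    have hκfun : ∀ x, κ x = (ren 0).symm (πh (renε x)) := by
      intro x
      simp [hκ, Equiv.trans_apply]
    -- the two base rules are variants via κ
    have hcompo : ∀ (u₀ u₁ : Term F), u₀.rename (ren 0) = (u₁.rename renε).rename πh →
        u₀ = u₁.rename κ := by
      intro u₀ u₁ h
      have h2 := congrArg (Term.rename (ren 0).symm) h
      rw [rename_symm_cancel] at h2
      rw [h2, rename_rename, rename_rename]
      rw [rename_eq_subst, rename_eq_subst]
      exact Term.subst_ext fun x _ => by rw [hκfun]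
    have hcomp_l : d0.1.lhs = (dat j0).1.lhs.rename κ := by
      refine hcompo _ _ ?_
      have h1 : ρc.lhs = (ρε.lhs.rename πh) := hπl
      rw [hρc2, hρε] at h1
      exact h1
    have hcomp_r : d0.1.rhs = (dat j0).1.rhs.rename κ := by
      refine hcompo _ _ ?_
      have h1 : ρc.rhs = (ρε.rhs.rename πh) := hπr
      rw [hρc2, hρε] at h1
      exact h1
    have hcomp_c : d0.1.cond = (dat j0).1.cond.rename κ := by
      refine hcompo _ _ ?_
      have h1 : ρc.cond = (ρε.cond.rename πh) := hπc
      rw [hρc2, hρε] at h1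
      exact h1
    have hrule : d0.1 = ruleRename κ (dat j0).1 :=
      Rule.ext' hcomp_l hcomp_r hcomp_c
    have hLκ : ∀ x, x ∈ LVar (dat j0).1 ↔ κ x ∈ LVar d0.1 := by
      intro x
      constructor
      · intro hx
        rw [hrule]
        exact mem_LVar_ruleRename.2 ⟨x, hx, rfl⟩
      · intro hx
        rw [hrule] at hx
        obtain ⟨y, hy, hyx⟩ := mem_LVar_ruleRename.1 hx
        rwa [← κ.injective hyx]
    -- right-hand side variables are left-hand side variables
    have hsub1 : ∀ x ∈ (dat j0).1.rhs.vars, x ∈ (dat j0).1.lhs.vars := by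
      intro x hx
      have h1 : κ x ∈ d0.1.rhs.vars := by
        rw [hcomp_r]
        exact mem_vars_rename.2 ⟨x, hx, rfl⟩
      have h2 : (ren 0) (κ x) ∈ ρc.rhs.vars := by
        rw [hρc2]
        exact mem_vars_rename.2 ⟨κ x, h1, rfl⟩
      have h3 := hsubv h2
      rw [hρc2] at h3
      obtain ⟨y, hy, hyx⟩ := mem_vars_rename.1 h3
      have hy2 : y = κ x := (ren 0).injective hyx
      subst hy2
      rw [hcomp_l] at hy
      obtain ⟨z, hz, hzx⟩ := mem_vars_rename.1 hy
      rwa [← κ.injective hzx]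
    -- the unifier equates the two value instances pointwise
    have hluni : (dat j0).1.lhs.subst (fun x => (mu (dat j0) x).subst σT)
        = (dat j0).1.lhs.subst (fun x => ((mu d0) (κ x)).subst σT) := by
      have huni := hunif _ (hgetmem j0) l (by rw [hp0]; exact Term.subtermAt_nil l)
      rw [Unifies, hlp j0] at huni
      rw [hl, hcomp_l] at huni
      have h1 : (dat j0).1.lhs.subst (fun x => (mu (dat j0) x).subst σT)
          = ((dat j0).1.lhs.subst (mu (dat j0))).subst σT := (Term.subst_subst _ _ _).symm
      have h2 : (dat j0).1.lhs.subst (fun x => ((mu d0) (κ x)).subst σT)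
          = (((dat j0).1.lhs.rename κ).subst (mu d0)).subst σT := by
        rw [rename_eq_subst, Term.subst_subst, Term.subst_subst]
        refine Term.subst_ext fun x _ => ?_
        rw [Term.subst_var]
      rw [h1, h2]
      exact huni
    have hptwise : ∀ x ∈ (dat j0).1.lhs.vars,
        (mu (dat j0) x).subst σT = ((mu d0) (κ x)).subst σT := by
      intro x hx
      obtain ⟨p, hp⟩ := Term.exists_pos_of_mem_vars hx
      have e1 := Term.subtermAt_subst hp (fun x => (mu (dat j0) x).subst σT)
      have e2 := Term.subtermAt_subst hp (fun x => ((mu d0) (κ x)).subst σT)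
      rw [hluni] at e1
      rw [e2] at e1
      have := Option.some.inj e1
      rw [Term.subst_var, Term.subst_var] at this
      exact this.symm
    have hvaleq : ∀ x, x ∈ (dat j0).1.lhs.vars → x ∈ LVar (dat j0).1 →
        (dat j0).2.1 x = d0.2.1 (κ x) := by
      intro x hx hxl
      have h1 := hptwise x hx
      simp only [hmuDef] at h1
      rw [if_pos hxl, if_pos ((hLκ x).1 hxl)] at h1
      rw [isVal_subst ((hdat j0).2.1 x hxl), isVal_subst (hd0.2.1 (κ x)
        ((hLκ x).1 hxl))] at h1
      exact h1
    -- the renaming between the two TRS rules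
    set f : ℕ → ℕ := fun y => d0.2.2 (κ ((dat j0).2.2.symm y)) with hfdef
    have hfinj : Function.Injective f := by
      intro a b hab
      simp only [hfdef] at hab
      have h1 := κ.injective (d0.2.2.injective hab)
      exact (dat j0).2.2.symm.injective h1
    set S : Finset ℕ := ((dat j0).1.lhs.varsList.map (dat j0).2.2).toFinset
      ∪ ((dat j0).1.rhs.varsList.map (dat j0).2.2).toFinset with hSdef
    obtain ⟨π, hπ⟩ := exists_perm_agree f hfinj S
    have hSl : ∀ x ∈ (dat j0).1.lhs.vars, (dat j0).2.2 x ∈ S := by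
      intro x hx
      rw [hSdef]
      exact Finset.mem_union_left _ (List.mem_toFinset.2 (List.mem_map.2 ⟨x, hx, rfl⟩))
    have hSr : ∀ x ∈ (dat j0).1.rhs.vars, (dat j0).2.2 x ∈ S := by
      intro x hx
      rw [hSdef]
      exact Finset.mem_union_right _ (List.mem_toFinset.2 (List.mem_map.2 ⟨x, hx, rfl⟩))
    have hagree : ∀ x, x ∈ (dat j0).1.lhs.vars → (dat j0).2.2 x ∈ S →
        ((mu (dat j0)) x).rename π = (mu d0) (κ x) := by
      intro x hx hxS
      by_cases hxl : x ∈ LVar (dat j0).1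
      · simp only [hmuDef]
        rw [if_pos hxl, if_pos ((hLκ x).1 hxl)]
        rw [show ((dat j0).2.1 x).rename π = ((dat j0).2.1 x).subst
          (fun z => Term.var (π z)) from rfl]
        rw [isVal_subst ((hdat j0).2.1 x hxl)]
        exact hvaleq x hx hxl
      · simp only [hmuDef]
        rw [if_neg hxl, if_neg (fun hc => hxl ((hLκ x).2 hc))]
        rw [rename_eq_subst, Term.subst_var, hπ _ hxS]
        simp [hfdef]
    have hlvariant : l = (prs.get j0).2.1.rename π := by
      rw [hlp j0, hl, hcomp_l]
      rw [rename_eq_subst (π := ⇑κ), rename_eq_subst (π := ⇑π), Term.subst_subst,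
        Term.subst_subst]
      refine Term.subst_ext fun x hx => ?_
      rw [Term.subst_var]
      exact (hagree x hx (hSl x hx)).symm
    have hrvariant : r = (prs.get j0).2.2.rename π := by
      rw [hrp j0, hr, hcomp_r]
      rw [rename_eq_subst (π := ⇑κ), rename_eq_subst (π := ⇑π), Term.subst_subst,
        Term.subst_subst]
      refine Term.subst_ext fun x hx => ?_
      rw [Term.subst_var]
      exact (hagree x (hsub1 x hx) (hSr x hx)).symm
    have hprseq : prs = [([], (prs.get j0).2.1, (prs.get j0).2.2)] := by
      refine List.ext_getElem (by simp [← hk, hk1]) ?_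
      intro i h1 h2
      have hi0 : i = 0 := by simpa using h2
      subst hi0
      show prs[0] = ([], (prs.get j0).2.1, (prs.get j0).2.2)
      have : prs.get j0 = prs[0] := rfl
      rw [← this, ← hp0]
    exact hroot _ _ hprseq ⟨π, hlvariant, hrvariant⟩
  · -- s = s'.subst δ
    have hargs : (prs'.map fun pr => (pr.1, pr.2.rhs.subst σ')).map
        (fun pu => (pu.1, pu.2.subst δ)) = prs.map fun pr => (pr.1, pr.2.2.subst σT) := by
      rw [List.map_map]
      refine List.ext_getElem (by simp [hprs', hk]) ?_
      intro i h1 h2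
      simp only [hprs', List.length_map, List.length_ofFn] at h1
      simp only [List.getElem_map, hprs', List.getElem_ofFn]
      refine Prod.ext rfl ?_
      show ((ruleRename (ren (i + 1)) (DN (i + 1)).1).rhs.subst σ').subst δ = _
      rw [hcomp]
      show ((DN (i + 1)).1.rhs.rename (ren (i + 1))).subst θ = _
      rw [hbridge (i + 1) (by omega) _
        (fun x hx => hBDN (i + 1) (by omega) x (Or.inl (Or.inr hx)))]
      rw [hDNj ⟨i, by omega⟩, ← hrp ⟨i, by omega⟩]
      rfl
    have h2 := replaceAll_subst hs' δ
    rw [hlsigδ, hargs, hrepl] at h2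
    exact Option.some.inj h2
  · -- t = t'.subst δ
    rw [htδ, ht]
  · -- δ assigns values on the variables of Φ
    exact fun y hy => hvalsΦ y hy
  · -- validity of Φδ
    have hgood : GoodC R (Φ.subst δ) := by
      rw [hΦ, subst_conj, subst_conj]
      exact goodC_conj hwf g1 (goodC_conj hwf g2 g3)
    refine validC_of_ground_tt ?_ hgood.2.2
    intro x hx
    rw [hgood.2.1] at hx
    exact hx



end LCT
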